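/- arXiv:2404.03530 — 2 statements merged into one kernel-verified Lean document; each statement's English description precedes it below -/
import Mathlib

section
/- Let (f_1,...,f_m) be a sequence of not necessarily homogeneous polynomials of positive degrees in R = K[x_1,...,x_n], let F^top = (f_1^top,...,f_m^top) be the sequence of top-degree parts, and let F^h ⊂ R' = R[y] be the set of homogenizations. Assume F^top is cryptographic semi-regular and let D = d_reg(⟨F^top⟩). Then for every d < D, dim_K (R'/⟨F^h⟩)_d = dim_K (R/⟨F^top⟩)_d + dim_K (R'/⟨F^h⟩)_{d-1}, and consequently dim_K (R'/⟨F^h⟩)_d = Σ_{i=0}^d dim_K (R/⟨F^top⟩)_i. -/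
open MvPolynomial

namespace GBPaper

/-- The dimension of the degree-`d` homogeneous piece of `R/I`,
where `R = K[x_i : i ∈ σ]`. -/
noncomputable def hilbertFn (K : Type*) [Field K] {σ : Type*}
    (I : Ideal (MvPolynomial σ K)) (d : ℕ) : ℕ :=
  Module.finrank K
    ((MvPolynomial.homogeneousSubmodule σ K d).map
      (Ideal.Quotient.mkₐ K I).toLinearMap)

/-- An ideal is homogeneous iff it contains all homogeneous components of its elements. -/
def IsHomogeneousIdeal {K : Type*} [Field K] {σ : Type*}
    (I : Ideal (MvPolynomial σ K)) : Prop :=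
  ∀ f ∈ I, ∀ d : ℕ, MvPolynomial.homogeneousComponent d f ∈ I

/-- The degree of regularity: the least `d` with `R_d = I_d`. -/
noncomputable def degReg (K : Type*) [Field K] {σ : Type*}
    (I : Ideal (MvPolynomial σ K)) : ℕ :=
  sInf {d : ℕ | ∀ f : MvPolynomial σ K, f.IsHomogeneous d → f ∈ I}

/-- The generalized degree of regularity: the least `d₀` from which on the Hilbert
function of `R/I` is constant. -/
noncomputable def gdegReg (K : Type*) [Field K] {σ : Type*}
    (I : Ideal (MvPolynomial σ K)) : ℕ :=
  sInf {d₀ : ℕ | ∀ d : ℕ, d₀ ≤ d → hilbertFn K I d = hilbertFn K I d₀}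

/-- The leading monomial (leading exponent) of a polynomial with respect to a
monomial order. -/
noncomputable def lm {K : Type*} [Field K] {σ : Type*} (m : MonomialOrder σ)
    (f : MvPolynomial σ K) : σ →₀ ℕ :=
  m.toSyn.symm (f.support.sup fun s => m.toSyn s)

/-- A monomial order is graded (degree-compatible) if it refines total degree. -/
def MonIsGraded {σ : Type*} (m : MonomialOrder σ) : Prop :=
  ∀ a b : σ →₀ ℕ, a.degree < b.degree → m.toSyn a < m.toSyn b

/-- `G` is the reduced Gröbner basis of `I` with respect to the monomial order `m`. -/
structure IsReducedGB {K : Type*} [Field K] {σ : Type*} (m : MonomialOrder σ)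
    (I : Ideal (MvPolynomial σ K)) (G : Finset (MvPolynomial σ K)) : Prop where
  subset : (G : Set (MvPolynomial σ K)) ⊆ I
  zero_not_mem : (0 : MvPolynomial σ K) ∉ G
  monic : ∀ g ∈ G, MvPolynomial.coeff (lm m g) g = 1
  isGB : ∀ f ∈ I, f ≠ 0 → ∃ g ∈ G, lm m g ≤ lm m f
  reduced : ∀ g ∈ G, ∀ g' ∈ G, g ≠ g' → ∀ s ∈ g.support, ¬ lm m g' ≤ s

/-- The degree reverse lexicographic order with `x_0 ≻ x_1 ≻ ⋯`. -/
def IsDegRevLex {n : ℕ} (m : MonomialOrder (Fin n)) : Prop :=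
  ∀ a b : Fin n →₀ ℕ, m.toSyn a < m.toSyn b ↔
    (a.degree < b.degree ∨
      (a.degree = b.degree ∧ ∃ i, b i < a i ∧ ∀ j, i < j → a j = b j))

/-- Restriction of an exponent vector on `n+1` variables to the first `n` variables. -/
noncomputable def restr {n : ℕ} (a : Fin (n + 1) →₀ ℕ) : Fin n →₀ ℕ :=
  Finsupp.equivFunOnFinite.symm fun i => a i.castSucc

/-- Extension of an exponent vector on `n` variables to `n+1` variables (with
`y`-exponent `0`). -/
noncomputable def extX {n : ℕ} (a : Fin n →₀ ℕ) : Fin (n + 1) →₀ ℕ :=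
  Finsupp.embDomain Fin.castSuccEmb a

/-- `m'` is the homogenization (w.r.t. the last variable `y`) of the graded
monomial order `m₀`: it compares first total degrees, then the `X`-parts using `m₀`. -/
def IsHomogenizationOrder {n : ℕ} (m' : MonomialOrder (Fin (n + 1)))
    (m₀ : MonomialOrder (Fin n)) : Prop :=
  ∀ a b : Fin (n + 1) →₀ ℕ, m'.toSyn a < m'.toSyn b ↔
    (a.degree < b.degree ∨
      (a.degree = b.degree ∧ m₀.toSyn (restr a) < m₀.toSyn (restr b)))

/-- The top part (maximal total degree part) of a polynomial. -/
noncomputable def topPart {K : Type*} [Field K] {σ : Type*}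
    (f : MvPolynomial σ K) : MvPolynomial σ K :=
  MvPolynomial.homogeneousComponent f.totalDegree f

/-- The homogenization of `f ∈ K[x_1,…,x_n]` by the extra (last) variable `y`. -/
noncomputable def homog {K : Type*} [Field K] {n : ℕ}
    (f : MvPolynomial (Fin n) K) : MvPolynomial (Fin (n + 1)) K :=
  ∑ s ∈ f.support,
    MvPolynomial.monomial
      (extX s + Finsupp.single (Fin.last n) (f.totalDegree - s.degree))
      (f.coeff s)

/-- The last variable `y` used for homogenization. -/
noncomputable def yvar (K : Type*) [Field K] (n : ℕ) : MvPolynomial (Fin (n + 1)) K :=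
  MvPolynomial.X (Fin.last n)

/-- Substituting `y = 0`, the "top part" of a homogeneous polynomial in `R[y]`. -/
noncomputable def setYZero {K : Type*} [Field K] {n : ℕ}
    (g : MvPolynomial (Fin (n + 1)) K) : MvPolynomial (Fin (n + 1)) K :=
  MvPolynomial.aeval
    (fun i => if i = Fin.last n then 0 else MvPolynomial.X i) g

/-- The ideal generated by the polynomials `f j` for `j < i`. -/
noncomputable def prevIdeal {K : Type*} [Field K] {σ : Type*} {M : ℕ}
    (f : Fin M → MvPolynomial σ K) (i : Fin M) : Ideal (MvPolynomial σ K) :=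
  Ideal.span (f '' {j | j < i})

/-- `d`-regularity of a sequence of homogeneous polynomials of degrees `dg`. -/
def IsDRegularSeq {K : Type*} [Field K] {σ : Type*} {M : ℕ}
    (f : Fin M → MvPolynomial σ K) (dg : Fin M → ℕ) (d : ℕ) : Prop :=
  ∀ i : Fin M, ∀ g : MvPolynomial σ K, ∀ e : ℕ,
    g.IsHomogeneous e → e + dg i < d →
    g * f i ∈ prevIdeal f i → g ∈ prevIdeal f i

/-- Semi-regularity (Pardue): each multiplication map on graded pieces of the
successive quotients is injective or surjective. -/
def IsSemiRegularSeq {K : Type*} [Field K] {σ : Type*} {M : ℕ}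
    (f : Fin M → MvPolynomial σ K) (dg : Fin M → ℕ) : Prop :=
  ∀ i : Fin M, ∀ t : ℕ, dg i ≤ t →
    (∀ g : MvPolynomial σ K, g.IsHomogeneous (t - dg i) →
        g * f i ∈ prevIdeal f i → g ∈ prevIdeal f i) ∨
    (∀ h : MvPolynomial σ K, h.IsHomogeneous t →
        ∃ g : MvPolynomial σ K, g.IsHomogeneous (t - dg i) ∧
          h - g * f i ∈ prevIdeal f i)

/-- The power series `∏ (1 - z^{d_i}) / (1-z)^n` over `ℤ`. -/
noncomputable def semiRegSeries (n : ℕ) {M : ℕ} (dg : Fin M → ℕ) : PowerSeries ℤ :=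
  (∏ i : Fin M, (1 - (PowerSeries.X : PowerSeries ℤ) ^ dg i)) *
    ((PowerSeries.invOneSubPow ℤ n : (PowerSeries ℤ)ˣ) : PowerSeries ℤ)

/-- The cutoff of the truncation `[·]`: the first index with a nonpositive coefficient. -/
noncomputable def truncCutoff (P : PowerSeries ℤ) : ℕ :=
  sInf {t : ℕ | PowerSeries.coeff (R := ℤ) t P ≤ 0}

/-- The coefficient of `z^t` in the series `[P]` obtained by truncating `P` after
the last consecutive positive coefficient. -/
noncomputable def truncCoeff (P : PowerSeries ℤ) (t : ℕ) : ℤ :=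
  if t < truncCutoff P then PowerSeries.coeff (R := ℤ) t P else 0

section Koszul

variable {K : Type*} [Field K] {σ : Type*} {M : ℕ}

/-- Index set of the degree-`i` part of the Koszul complex on `M` polynomials. -/
abbrev KIdx (M i : ℕ) := {s : Finset (Fin M) // s.card = i}

/-- The Koszul differential `K_{i+1} → K_i` of the Koszul complex on `f`. -/
noncomputable def koszulD (f : Fin M → MvPolynomial σ K) (i : ℕ)
    (v : KIdx M (i + 1) → MvPolynomial σ K) :
    KIdx M i → MvPolynomial σ K :=
  fun t => ∑ j : Fin M,
    if h : j ∈ t.val then 0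
    else ((-1 : MvPolynomial σ K) ^ (t.val.filter (fun l => l < j)).card) * f j *
      v ⟨insert j t.val, by rw [Finset.card_insert_of_notMem h, t.prop]⟩

/-- A Koszul `i`-chain is homogeneous of (internal) degree `d`: each component at a
subset `s` is homogeneous of degree `d - ∑_{j ∈ s} dg j` (and zero if `d` is smaller
than this shift). -/
def KChainHom (dg : Fin M → ℕ) (i : ℕ)
    (v : KIdx M i → MvPolynomial σ K) (d : ℕ) : Prop :=
  ∀ t : KIdx M i,
    (v t).IsHomogeneous (d - ∑ j ∈ t.val, dg j) ∧
    (d < ∑ j ∈ t.val, dg j → v t = 0)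

/-- A Koszul `i`-cycle: an `i`-chain killed by the Koszul differential
(every `0`-chain is a cycle). -/
def IsKCycle (f : Fin M → MvPolynomial σ K) :
    (i : ℕ) → (KIdx M i → MvPolynomial σ K) → Prop
  | 0, _ => True
  | (i + 1), v => koszulD f i v = 0

/-- The degree-`d` part of the `i`-th Koszul homology of `f` vanishes:
every homogeneous cycle of degree `d` is a boundary. -/
def KoszulHVanish (f : Fin M → MvPolynomial σ K) (dg : Fin M → ℕ)
    (i d : ℕ) : Prop :=
  ∀ v : KIdx M i → MvPolynomial σ K, KChainHom dg i v d → IsKCycle f i v →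
    ∃ w : KIdx M (i + 1) → MvPolynomial σ K, koszulD f i w = v

/-- The sum `∑ v_j f_j` of which syzygies are the kernel. -/
noncomputable def syzSum (f v : Fin M → MvPolynomial σ K) : MvPolynomial σ K :=
  ∑ j : Fin M, v j * f j

/-- The module of trivial (Koszul) syzygies of `f`. -/
noncomputable def trivSyz (f : Fin M → MvPolynomial σ K) :
    Submodule (MvPolynomial σ K) (Fin M → MvPolynomial σ K) :=
  Submodule.span (MvPolynomial σ K)
    {w | ∃ i j : Fin M, i < j ∧ w = Pi.single j (f i) - Pi.single i (f j)}

/-- A tuple `v` is homogeneous of degree `e` as an element of `⊕ R(-dg j)`. -/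
def TupleHom (dg : Fin M → ℕ) (v : Fin M → MvPolynomial σ K) (e : ℕ) : Prop :=
  ∀ j : Fin M, (v j).IsHomogeneous (e - dg j) ∧ (e < dg j → v j = 0)

end Koszul

end GBPaper

namespace GBPaper

/-- The top part `h|_{y=0}` of a homogeneous polynomial in `R' = R[y]`,
viewed as an element of `R = K[x_1,…,x_n]`. -/
noncomputable def topPartR {K : Type*} [Field K] {n : ℕ}
    (g : MvPolynomial (Fin (n + 1)) K) : MvPolynomial (Fin n) K :=
  MvPolynomial.aeval (Fin.lastCases 0 fun i => MvPolynomial.X i) g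

end GBPaper

open GBPaper

namespace Stmt3Aux

open MvPolynomial Finset GBPaper

variable {K : Type*} [Field K]

theorem deg_le_totalDegree {σ : Type*} {g : MvPolynomial σ K} {s : σ →₀ ℕ}
    (hs : s ∈ g.support) : s.degree ≤ g.totalDegree :=
  le_totalDegree hs

theorem deg_add {σ : Type*} (a b : σ →₀ ℕ) : (a + b).degree = a.degree + b.degree := by
  rw [Finsupp.degree_eq_weight_one]
  exact map_add _ a b

theorem deg_single {σ : Type*} (i : σ) (k : ℕ) : (Finsupp.single i k).degree = k := by
  classical
  rcases eq_or_ne k 0 with rfl | hk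
  · rw [Finsupp.single_zero, map_zero]
  · rw [Finsupp.degree_apply, Finsupp.support_single_ne_zero _ hk, Finset.sum_singleton,
      Finsupp.single_eq_same]

theorem deg_eq_sum_univ {N : ℕ} (v : Fin N →₀ ℕ) : v.degree = ∑ i, v i := by
  rw [Finsupp.degree_apply]
  exact Finset.sum_subset (Finset.subset_univ _) fun i _ hi => Finsupp.notMem_support_iff.1 hi

theorem hc_mul {σ : Type*} {F : MvPolynomial σ K} {dF : ℕ} (hF : F.IsHomogeneous dF)
    (r : MvPolynomial σ K) (e : ℕ) :
    homogeneousComponent e (r * F) =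
      if dF ≤ e then homogeneousComponent (e - dF) r * F else 0 := by
  induction r using MvPolynomial.induction_on' with
  | monomial u a =>
    have h1 : (monomial u a * F) ∈ homogeneousSubmodule σ K (u.degree + dF) :=
      (mem_homogeneousSubmodule _ _).2 ((isHomogeneous_monomial a rfl).mul hF)
    have h2 : (monomial u a) ∈ homogeneousSubmodule σ K u.degree :=
      (mem_homogeneousSubmodule _ _).2 (isHomogeneous_monomial a rfl)
    rw [homogeneousComponent_of_mem h1, homogeneousComponent_of_mem h2]
    split_ifs <;> first
      | rfl
      | (exfalso; omega)
      | (rw [zero_mul])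
  | add p q hp hq =>
    rw [add_mul, map_add, hp, hq]
    split_ifs with h
    · rw [map_add, add_mul]
    · rw [add_zero]

theorem hc_eq_sum {σ : Type*} (g : MvPolynomial σ K) (d : ℕ) :
    homogeneousComponent d g =
      ∑ s ∈ g.support, if d = s.degree then monomial s (coeff s g) else 0 := by
  conv_lhs => rw [← support_sum_monomial_coeff g]
  rw [map_sum]
  exact Finset.sum_congr rfl fun s _ =>
    homogeneousComponent_of_mem ((mem_homogeneousSubmodule _ _).2 (isHomogeneous_monomial _ rfl))

theorem hc_span {σ : Type*} {ι : Type*} [Fintype ι] {G : ι → MvPolynomial σ K} {e : ι → ℕ}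
    (hG : ∀ i, (G i).IsHomogeneous (e i)) {g : MvPolynomial σ K}
    (hg : g ∈ Ideal.span (Set.range G)) (d : ℕ) :
    ∃ a : ι → MvPolynomial σ K,
      (∀ i, (a i).IsHomogeneous (d - e i)) ∧ (∀ i, d < e i → a i = 0) ∧
        homogeneousComponent d g = ∑ i, a i * G i := by
  classical
  obtain ⟨A, hA⟩ := Ideal.mem_span_range_iff_exists_fun.1 hg
  refine ⟨fun i => if e i ≤ d then homogeneousComponent (d - e i) (A i) else 0, ?_, ?_, ?_⟩
  · intro i
    dsimp only
    split_ifs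
    · exact homogeneousComponent_isHomogeneous _ _
    · exact isHomogeneous_zero _ _ _
  · intro i hi
    dsimp only
    rw [if_neg (by omega)]
  · rw [← hA, map_sum]
    refine Finset.sum_congr rfl fun i _ => ?_
    dsimp only
    rw [hc_mul (hG i)]
    split_ifs with h
    · rfl
    · rw [zero_mul]

theorem mem_span_image_extract {σ : Type*} {M : ℕ} (F : Fin M → MvPolynomial σ K)
    (m : Fin M) {x : MvPolynomial σ K} (hx : x ∈ Ideal.span (F '' {j | j < m})) :
    ∃ r : Fin M → MvPolynomial σ K, (∀ j, ¬ j < m → r j = 0) ∧ x = ∑ j, r j * F j := by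
  classical
  refine Submodule.span_induction ?_ ?_ ?_ ?_ hx
  · rintro _ ⟨j, hj, rfl⟩
    refine ⟨fun j' => if j' = j then 1 else 0, ?_, ?_⟩
    · intro j' hj'
      dsimp only
      rw [if_neg]
      rintro rfl
      exact hj' hj
    · rw [Finset.sum_congr rfl fun j' (_ : j' ∈ Finset.univ) => by
          rw [ite_mul, one_mul, zero_mul],
        Finset.sum_ite_eq' Finset.univ j (fun j' => F j'), if_pos (Finset.mem_univ j)]
  · exact ⟨0, fun _ _ => rfl, by simp⟩
  · rintro x y hx' hy' ⟨r, hr0, rfl⟩ ⟨s, hs0, rfl⟩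
    refine ⟨r + s, fun j hj => by rw [Pi.add_apply, hr0 j hj, hs0 j hj, add_zero], ?_⟩
    rw [← Finset.sum_add_distrib]
    exact Finset.sum_congr rfl fun j _ => by rw [Pi.add_apply, add_mul]
  · rintro a x hx' ⟨r, hr0, rfl⟩
    refine ⟨fun j => a * r j, fun j hj => by dsimp only; rw [hr0 j hj, mul_zero], ?_⟩
    rw [smul_eq_mul, Finset.mul_sum]
    exact Finset.sum_congr rfl fun j _ => by ring

/-! ### The substitution `y = 0` -/

variable {n : ℕ}

/-- Setting `y = 0`, as an algebra homomorphism into `K[x_1,…,x_n]`. -/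
noncomputable def piX (K : Type*) [Field K] (n : ℕ) :
    MvPolynomial (Fin (n + 1)) K →ₐ[K] MvPolynomial (Fin n) K :=
  MvPolynomial.aeval (Fin.lastCases 0 fun i => MvPolynomial.X i)

theorem piX_rename (p : MvPolynomial (Fin n) K) :
    piX K n (rename Fin.castSucc p) = p := by
  rw [piX, aeval_rename]
  have h : ((Fin.lastCases 0 fun i => (X i : MvPolynomial (Fin n) K)) ∘ Fin.castSucc) = X := by
    funext i
    simp only [Function.comp_apply]
    exact Fin.lastCases_castSucc i
  rw [h, aeval_X_left, AlgHom.id_apply]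

theorem piX_y : piX K n (X (Fin.last n)) = 0 := by
  rw [piX, aeval_X, Fin.lastCases_last]

theorem sub_rename_piX_mem (g : MvPolynomial (Fin (n + 1)) K) :
    g - rename Fin.castSucc (piX K n g) ∈
      Ideal.span {(X (Fin.last n) : MvPolynomial (Fin (n + 1)) K)} := by
  induction g using MvPolynomial.induction_on with
  | C a =>
    rw [show (piX K n) (C a) = C a from by rw [piX, aeval_C, MvPolynomial.algebraMap_eq],
      rename_C, sub_self]
    exact Submodule.zero_mem _
  | add p q hp hq =>
    have hmem := Ideal.add_mem _ hp hq
    have heq : p + q - rename Fin.castSucc (piX K n (p + q)) =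
        (p - rename Fin.castSucc (piX K n p)) + (q - rename Fin.castSucc (piX K n q)) := by
      rw [map_add, map_add]
      ring
    rw [heq]
    exact hmem
  | mul_X p i hp =>
    induction i using Fin.lastCases with
    | last =>
      rw [map_mul, piX_y, mul_zero, map_zero, sub_zero]
      exact Ideal.mem_span_singleton.2 (dvd_mul_left _ _)
    | cast j =>
      rw [map_mul,
        show piX K n (X j.castSucc) = X j from by rw [piX, aeval_X, Fin.lastCases_castSucc],
        map_mul, rename_X]
      have heq : p * X j.castSucc - rename Fin.castSucc (piX K n p) * X j.castSucc =
          (p - rename Fin.castSucc (piX K n p)) * X j.castSucc := by ring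
      rw [heq]
      exact Ideal.mul_mem_right _ _ hp

theorem piX_eq_zero_mem (g : MvPolynomial (Fin (n + 1)) K) (h : piX K n g = 0) :
    g ∈ Ideal.span {(X (Fin.last n) : MvPolynomial (Fin (n + 1)) K)} := by
  have hmem := sub_rename_piX_mem (K := K) g
  rwa [h, map_zero, sub_zero] at hmem

theorem extX_eq (s : Fin n →₀ ℕ) : extX s = Finsupp.mapDomain Fin.castSucc s := by
  rw [extX, Finsupp.embDomain_eq_mapDomain]
  rfl

theorem deg_extX (s : Fin n →₀ ℕ) : (extX s).degree = s.degree := by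
  rw [extX, Finsupp.degree_apply, Finsupp.degree_apply, Finsupp.support_embDomain, Finset.sum_map]
  exact Finset.sum_congr rfl fun a _ => Finsupp.embDomain_apply_self _ _ _

theorem restr_apply (v : Fin (n + 1) →₀ ℕ) (j : Fin n) : restr v j = v j.castSucc := by
  rw [restr]
  simp

theorem v_decomp (v : Fin (n + 1) →₀ ℕ) :
    v = Finsupp.mapDomain Fin.castSucc (restr v) + Finsupp.single (Fin.last n) (v (Fin.last n)) := by
  ext i
  rw [Finsupp.add_apply]
  induction i using Fin.lastCases with
  | last =>
    have h0 : Finsupp.mapDomain Fin.castSucc (restr v) (Fin.last n) = 0 :=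
      Finsupp.mapDomain_notin_range _ _ (by rintro ⟨j, hj⟩; exact (Fin.castSucc_lt_last j).ne hj)
    rw [h0, Finsupp.single_eq_same, zero_add]
  | cast j =>
    rw [Finsupp.mapDomain_apply (Fin.castSucc_injective n),
      Finsupp.single_eq_of_ne' (Fin.castSucc_lt_last j).ne', add_zero, restr_apply]

theorem deg_restr (v : Fin (n + 1) →₀ ℕ) : v.degree = (restr v).degree + v (Fin.last n) := by
  rw [deg_eq_sum_univ v, deg_eq_sum_univ (restr v), Fin.sum_univ_castSucc]
  have hsum : ∑ i : Fin n, v i.castSucc = ∑ i : Fin n, restr v i :=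
    Finset.sum_congr rfl fun j _ => (restr_apply v j).symm
  omega

theorem monomial_split (v : Fin (n + 1) →₀ ℕ) (c : K) :
    monomial v c = rename Fin.castSucc (monomial (restr v) c) * X (Fin.last n) ^ v (Fin.last n) := by
  rw [rename_monomial, X_pow_eq_monomial, monomial_mul, mul_one, ← v_decomp]

theorem piX_monomial_isHomogeneous (v : Fin (n + 1) →₀ ℕ) (c : K) :
    (piX K n (monomial v c)).IsHomogeneous v.degree := by
  rw [monomial_split v c, map_mul, piX_rename, map_pow, piX_y]
  rcases eq_or_ne (v (Fin.last n)) 0 with h0 | h0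
  · rw [h0, pow_zero, mul_one]
    exact isHomogeneous_monomial _ (by rw [deg_restr v, h0, add_zero])
  · rw [zero_pow h0, mul_zero]
    exact isHomogeneous_zero _ _ _

theorem piX_isHomogeneous {g : MvPolynomial (Fin (n + 1)) K} {d : ℕ}
    (hg : g.IsHomogeneous d) : (piX K n g).IsHomogeneous d := by
  rw [← support_sum_monomial_coeff g, map_sum]
  apply IsHomogeneous.sum
  intro v hv
  have hd : v.degree = d := by
    have hw := hg (mem_support_iff.1 hv)
    rw [Finsupp.degree_eq_weight_one]
    exact hw
  exact hd ▸ piX_monomial_isHomogeneous v _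

theorem piX_homog (f : MvPolynomial (Fin n) K) : piX K n (homog f) = topPart f := by
  rw [topPart, hc_eq_sum, homog, map_sum]
  refine Finset.sum_congr rfl fun s hs => ?_
  have hle : s.degree ≤ f.totalDegree := deg_le_totalDegree hs
  have hmon : (monomial (extX s + Finsupp.single (Fin.last n) (f.totalDegree - s.degree))
        (coeff s f) : MvPolynomial (Fin (n + 1)) K)
      = rename Fin.castSucc (monomial s (coeff s f)) * X (Fin.last n) ^ (f.totalDegree - s.degree) := by
    rw [rename_monomial, X_pow_eq_monomial, monomial_mul, mul_one, ← extX_eq]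
  rw [hmon, map_mul, piX_rename, map_pow, piX_y, zero_pow_eq, mul_ite, mul_one, mul_zero]
  exact if_congr (by omega) rfl rfl

theorem homog_isHomogeneous (f : MvPolynomial (Fin n) K) :
    (homog f).IsHomogeneous f.totalDegree := by
  rw [homog]
  apply IsHomogeneous.sum
  intro s hs
  apply isHomogeneous_monomial
  rw [deg_add, deg_extX, deg_single]
  have hle := deg_le_totalDegree hs
  omega

/-! ### Syzygies of a `D`-regular sequence in low degrees -/

theorem syz {σ : Type*} {M : ℕ} (F : Fin M → MvPolynomial σ K) (dgF : Fin M → ℕ)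
    (hF : ∀ i, (F i).IsHomogeneous (dgF i)) {D : ℕ}
    (hreg : IsDRegularSeq F dgF D) :
    ∀ k t, t < D → ∀ c : Fin M → MvPolynomial σ K,
      (∀ i, (c i).IsHomogeneous (t - dgF i)) → (∀ i, t < dgF i → c i = 0) →
      (∀ i : Fin M, k ≤ (i : ℕ) → c i = 0) → ∑ i, c i * F i = 0 →
      ∃ u : Fin M → Fin M → MvPolynomial σ K, ∀ i : Fin M,
        c i = (∑ j : Fin M, if (i : ℕ) < (j : ℕ) then u i j * F j else 0)
            - ∑ j : Fin M, if (j : ℕ) < (i : ℕ) then u j i * F j else 0 := by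
  classical
  intro k
  induction k with
  | zero =>
    intro t ht c hhom hvan hzero hsum
    exact ⟨0, fun i => by simp [hzero i (Nat.zero_le _)]⟩
  | succ k IH =>
    intro t ht c hhom hvan hzero hsum
    by_cases hk : k < M
    · set m : Fin M := ⟨k, hk⟩ with hm
      have hmval : (m : ℕ) = k := rfl
      have hr' : ∃ r' : Fin M → MvPolynomial σ K,
          (∀ j, ¬ j < m → r' j = 0) ∧ (c m = ∑ j, r' j * F j) ∧
          (∀ j, (r' j).IsHomogeneous (t - dgF m - dgF j)) ∧
          (∀ j, ¬ (dgF m + dgF j ≤ t) → r' j = 0) := by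
        by_cases hdm : dgF m ≤ t
        · have hmem : c m * F m ∈ prevIdeal F m := by
            have hsplit : c m * F m + ∑ i ∈ Finset.univ.erase m, c i * F i = 0 := by
              have h := Finset.add_sum_erase Finset.univ (fun i => c i * F i) (Finset.mem_univ m)
              rw [h]
              exact hsum
            have hneg : c m * F m = -∑ i ∈ Finset.univ.erase m, c i * F i :=
              eq_neg_of_add_eq_zero_left hsplit
            rw [hneg]
            refine neg_mem (Submodule.sum_mem _ fun i hi => ?_)
            rcases lt_or_ge (i : ℕ) k with hik | hik
            · exact Ideal.mul_mem_left _ _ (Ideal.subset_span ⟨i, hik, rfl⟩)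
            · have hi0 : c i = 0 := by
                rcases eq_or_lt_of_le hik with hik' | hik'
                · exfalso
                  exact Finset.ne_of_mem_erase hi (Fin.ext hik'.symm)
                · exact hzero i hik'
              rw [hi0, zero_mul]
              exact Submodule.zero_mem _
          have hcm : c m ∈ prevIdeal F m :=
            hreg m (c m) (t - dgF m) (hhom m) (by omega) hmem
          obtain ⟨r, hr0, hrsum⟩ := mem_span_image_extract F m hcm
          refine ⟨fun j => if dgF m + dgF j ≤ t
              then homogeneousComponent (t - dgF m - dgF j) (r j) else 0, ?_, ?_, ?_, ?_⟩
          · intro j hj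
            dsimp only
            rw [hr0 j hj]
            simp
          · have h1 : c m = homogeneousComponent (t - dgF m) (c m) := by
              rw [homogeneousComponent_of_mem ((mem_homogeneousSubmodule _ _).2 (hhom m)),
                if_pos rfl]
            calc c m = homogeneousComponent (t - dgF m) (c m) := h1
              _ = homogeneousComponent (t - dgF m) (∑ j, r j * F j) := by rw [← hrsum]
              _ = ∑ j, homogeneousComponent (t - dgF m) (r j * F j) := map_sum _ _ _
              _ = ∑ j, (if dgF m + dgF j ≤ t
                    then homogeneousComponent (t - dgF m - dgF j) (r j) else 0) * F j := by
                  refine Finset.sum_congr rfl fun j _ => ?_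
                  rw [hc_mul (hF j)]
                  by_cases h2 : dgF m + dgF j ≤ t
                  · rw [if_pos (by omega), if_pos h2]
                  · rw [if_neg (by omega), if_neg h2, zero_mul]
          · intro j
            dsimp only
            split_ifs
            · exact homogeneousComponent_isHomogeneous _ _
            · exact isHomogeneous_zero _ _ _
          · intro j hj
            dsimp only
            rw [if_neg hj]
        · refine ⟨0, fun j _ => rfl, ?_, fun j => isHomogeneous_zero _ _ _, fun j _ => rfl⟩
          rw [hvan m (by omega)]
          simp
      obtain ⟨r', hr'0, hr'sum, hr'hom, hr'van⟩ := hr'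
      set c' : Fin M → MvPolynomial σ K := fun i => if i = m then 0 else c i + r' i * F m
        with hc'
      have hc'hom : ∀ i, (c' i).IsHomogeneous (t - dgF i) := by
        intro i
        rw [hc']
        dsimp only
        split_ifs with h
        · exact isHomogeneous_zero _ _ _
        · refine (hhom i).add ?_
          by_cases h2 : dgF m + dgF i ≤ t
          · have hmul := (hr'hom i).mul (hF m)
            rwa [show t - dgF m - dgF i + dgF m = t - dgF i by omega] at hmul
          · rw [hr'van i h2, zero_mul]
            exact isHomogeneous_zero _ _ _
      have hc'van : ∀ i, t < dgF i → c' i = 0 := by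
        intro i hi
        rw [hc']
        dsimp only
        split_ifs with h
        · rfl
        · rw [hvan i hi, hr'van i (by omega), zero_mul, add_zero]
      have hc'zero : ∀ i : Fin M, k ≤ (i : ℕ) → c' i = 0 := by
        intro i hi
        rw [hc']
        dsimp only
        split_ifs with h
        · rfl
        · have hne : (i : ℕ) ≠ k := fun hh => h (Fin.ext hh)
          have hnlt : ¬ i < m := by
            rw [Fin.lt_def]
            omega
          rw [hzero i (by omega), hr'0 i hnlt, zero_mul, add_zero]
      have hc'sum : ∑ i, c' i * F i = 0 := by
        have hsplit := Finset.add_sum_erase Finset.univ (fun i => c' i * F i) (Finset.mem_univ m)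
        rw [← hsplit]
        have hm0 : c' m = 0 := by rw [hc']; simp
        rw [hm0, zero_mul, zero_add]
        have hterm : ∀ i ∈ Finset.univ.erase m,
            c' i * F i = c i * F i + r' i * (F i * F m) := by
          intro i hi
          rw [hc']
          dsimp only
          rw [if_neg (Finset.ne_of_mem_erase hi)]
          ring
        rw [Finset.sum_congr rfl hterm, Finset.sum_add_distrib]
        have e1 : ∑ i ∈ Finset.univ.erase m, c i * F i = -(c m * F m) := by
          have hs := hsum
          have hsplit2 := Finset.add_sum_erase Finset.univ (fun i => c i * F i) (Finset.mem_univ m)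
          rw [← hsplit2] at hs
          exact eq_neg_of_add_eq_zero_right hs
        have e2 : ∑ i ∈ Finset.univ.erase m, r' i * (F i * F m) = c m * F m := by
          have e3 : ∑ i ∈ Finset.univ.erase m, r' i * (F i * F m)
              = (∑ i ∈ Finset.univ.erase m, r' i * F i) * F m := by
            rw [Finset.sum_mul]
            exact Finset.sum_congr rfl fun i _ => by ring
          have e4 : ∑ i ∈ Finset.univ.erase m, r' i * F i = ∑ i, r' i * F i := by
            apply Finset.sum_subset (Finset.erase_subset _ _)
            intro i _ hi
            have : i = m := by
              by_contra hne
              exact hi (Finset.mem_erase.2 ⟨hne, Finset.mem_univ i⟩)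
            rw [this, hr'0 m (lt_irrefl m), zero_mul]
          rw [e3, e4, ← hr'sum]
        rw [e1, e2]
        ring
      obtain ⟨u', hu'⟩ := IH t ht c' hc'hom hc'van hc'zero hc'sum
      refine ⟨fun i j => u' i j - if j = m then r' i else 0, fun i => ?_⟩
      have h1 : ∀ j : Fin M,
          (if (i : ℕ) < (j : ℕ) then (u' i j - if j = m then r' i else 0) * F j else 0)
          = (if (i : ℕ) < (j : ℕ) then u' i j * F j else 0)
            - (if j = m then (if (i : ℕ) < (j : ℕ) then r' i * F j else 0) else 0) := by
        intro j
        split_ifs <;> ring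
      have h2 : ∀ j : Fin M,
          (if (j : ℕ) < (i : ℕ) then (u' j i - if i = m then r' j else 0) * F j else 0)
          = (if (j : ℕ) < (i : ℕ) then u' j i * F j else 0)
            - (if i = m then (if (j : ℕ) < (i : ℕ) then r' j * F j else 0) else 0) := by
        intro j
        split_ifs <;> ring
      rw [Finset.sum_congr rfl fun j _ => h1 j, Finset.sum_congr rfl fun j _ => h2 j,
        Finset.sum_sub_distrib, Finset.sum_sub_distrib,
        Finset.sum_ite_eq' Finset.univ m
          (fun j => if (i : ℕ) < (j : ℕ) then r' i * F j else 0),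
        if_pos (Finset.mem_univ m)]
      have hcor2 : ∑ j : Fin M,
          (if i = m then (if (j : ℕ) < (i : ℕ) then r' j * F j else 0) else 0)
          = if i = m then (∑ j : Fin M, if (j : ℕ) < (i : ℕ) then r' j * F j else 0) else 0 := by
        split_ifs with h
        · rfl
        · exact Finset.sum_eq_zero fun j _ => rfl
      rw [hcor2]
      have hrow := hu' i
      rcases lt_trichotomy (i : ℕ) k with hik | hik | hik
      · have him : i ≠ m := fun hh => by rw [hh] at hik; exact lt_irrefl _ hik
        have hlt : (i : ℕ) < (m : ℕ) := hik
        rw [if_pos hlt, if_neg him]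
        have hci : c' i = c i + r' i * F m := by
          rw [hc']
          dsimp only
          rw [if_neg him]
        rw [hci] at hrow
        linear_combination hrow
      · have him : i = m := Fin.ext hik
        rw [him] at hrow ⊢
        rw [if_neg (lt_irrefl ((m : Fin M) : ℕ)), if_pos rfl]
        have hci : c' m = 0 := by
          rw [hc']
          dsimp only
          rw [if_pos rfl]
        rw [hci] at hrow
        have hsum2 : ∑ j : Fin M, (if (j : ℕ) < ((m : Fin M) : ℕ) then r' j * F j else 0)
            = ∑ j : Fin M, r' j * F j := by
          refine Finset.sum_congr rfl fun j _ => ?_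
          by_cases hj : (j : ℕ) < ((m : Fin M) : ℕ)
          · rw [if_pos hj]
          · rw [if_neg hj, hr'0 j (fun hlt2 => hj (Fin.lt_def.mp hlt2)), zero_mul]
        rw [hsum2, ← hr'sum]
        linear_combination hrow
      · have him : i ≠ m := fun hh => by rw [hh] at hik; exact lt_irrefl _ hik
        have hnlt : ¬ (i : ℕ) < (m : ℕ) := by omega
        rw [if_neg hnlt, if_neg him]
        have hci : c' i = c i := by
          rw [hc']
          dsimp only
          rw [if_neg him, hr'0 i (fun hlt2 => by have := Fin.lt_def.mp hlt2; omega), zero_mul,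
            add_zero]
        rw [hci] at hrow
        linear_combination hrow
    · exact IH t ht c hhom hvan
        (fun i hi => absurd i.isLt (by omega)) hsum

/-! ### `y` is a nonzerodivisor in low degrees -/

variable {M : ℕ}

theorem y_reg {f : Fin M → MvPolynomial (Fin n) K} {dg : Fin M → ℕ} {D : ℕ}
    (hdeg : ∀ i, (f i).totalDegree = dg i)
    (hcsr : IsDRegularSeq (fun i => topPart (f i)) dg D)
    {e : ℕ} {g : MvPolynomial (Fin (n + 1)) K} (hg : g.IsHomogeneous e) (htD : e + 1 < D)
    (hyg : X (Fin.last n) * g ∈ Ideal.span (Set.range fun i => homog (f i))) :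
    g ∈ Ideal.span (Set.range fun i => homog (f i)) := by
  classical
  have hfh : ∀ i, (homog (f i)).IsHomogeneous (dg i) := fun i =>
    hdeg i ▸ homog_isHomogeneous (f i)
  have hFh : ∀ i, (topPart (f i)).IsHomogeneous (dg i) := fun i =>
    hdeg i ▸ homogeneousComponent_isHomogeneous _ _
  obtain ⟨a, hahom, havan, hasum⟩ := hc_span hfh hyg (e + 1)
  have hygh : (X (Fin.last n) * g).IsHomogeneous (e + 1) := by
    have hmul := hg.mul (isHomogeneous_X K (Fin.last n))
    rwa [mul_comm] at hmul
  rw [homogeneousComponent_of_mem ((mem_homogeneousSubmodule _ _).2 hygh), if_pos rfl] at hasum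
  set c : Fin M → MvPolynomial (Fin n) K := fun i => piX K n (a i) with hc
  have hchom : ∀ i, (c i).IsHomogeneous (e + 1 - dg i) := fun i => piX_isHomogeneous (hahom i)
  have hcvan : ∀ i, e + 1 < dg i → c i = 0 := fun i hi => by
    rw [hc]
    dsimp only
    rw [havan i hi, map_zero]
  have hcsum : ∑ i, c i * topPart (f i) = 0 := by
    have h0 := congrArg (piX K n) hasum
    rw [map_mul, piX_y, zero_mul, map_sum] at h0
    calc ∑ i, c i * topPart (f i) = ∑ i, piX K n (a i * homog (f i)) :=
          Finset.sum_congr rfl fun i _ => by rw [map_mul, piX_homog, hc]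
      _ = 0 := h0.symm
  obtain ⟨u, hu⟩ := syz (fun i => topPart (f i)) dg hFh hcsr M (e + 1) htD c hchom hcvan
    (fun i hi => absurd i.isLt (by omega)) hcsum
  set Row : Fin M → MvPolynomial (Fin (n + 1)) K := fun i =>
    (∑ j : Fin M, if (i : ℕ) < (j : ℕ) then rename Fin.castSucc (u i j) * homog (f j) else 0)
    - ∑ j : Fin M, if (j : ℕ) < (i : ℕ) then rename Fin.castSucc (u j i) * homog (f j) else 0 with hRow
  have hRowpi : ∀ i, piX K n (Row i) = c i := by
    intro i
    rw [hRow]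
    dsimp only
    rw [map_sub, map_sum, map_sum, hu i]
    congr 1 <;> exact Finset.sum_congr rfl fun j _ => by
      rw [apply_ite (⇑(piX K n)), map_mul, piX_rename, piX_homog, map_zero]
  have hRowsyz : ∑ i, Row i * homog (f i) = 0 := by
    rw [hRow]
    dsimp only
    have expand : ∀ i : Fin M,
        ((∑ j : Fin M, if (i : ℕ) < (j : ℕ) then rename Fin.castSucc (u i j) * homog (f j) else 0)
          - ∑ j : Fin M, if (j : ℕ) < (i : ℕ) then rename Fin.castSucc (u j i) * homog (f j) else 0)
          * homog (f i)
        = (∑ j : Fin M, if (i : ℕ) < (j : ℕ)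
              then rename Fin.castSucc (u i j) * homog (f j) * homog (f i) else 0)
          - ∑ j : Fin M, if (j : ℕ) < (i : ℕ)
              then rename Fin.castSucc (u j i) * homog (f j) * homog (f i) else 0 := by
      intro i
      rw [sub_mul, Finset.sum_mul, Finset.sum_mul]
      congr 1 <;> exact Finset.sum_congr rfl fun j _ => by rw [ite_mul, zero_mul]
    rw [Finset.sum_congr rfl fun i _ => expand i, Finset.sum_sub_distrib]
    have hAB : (∑ i : Fin M, ∑ j : Fin M, if (i : ℕ) < (j : ℕ)
            then rename Fin.castSucc (u i j) * homog (f j) * homog (f i) else 0)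
        = ∑ i : Fin M, ∑ j : Fin M, if (j : ℕ) < (i : ℕ)
            then rename Fin.castSucc (u j i) * homog (f j) * homog (f i) else 0 := by
      rw [Finset.sum_comm]
      exact Finset.sum_congr rfl fun j _ => Finset.sum_congr rfl fun i _ => by
        split_ifs <;> ring
    rw [hAB, sub_self]
  have hdvd : ∀ i, ∃ b, a i - Row i = X (Fin.last n) * b := by
    intro i
    have h0 : piX K n (a i - Row i) = 0 := by
      rw [map_sub, hRowpi i]
      simp [hc]
    exact Ideal.mem_span_singleton.1 (piX_eq_zero_mem _ h0)
  choose b hb using hdvd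
  have hcancel : X (Fin.last n) * g = X (Fin.last n) * ∑ i, b i * homog (f i) := by
    rw [hasum]
    calc ∑ i, a i * homog (f i)
        = ∑ i, (Row i * homog (f i) + X (Fin.last n) * (b i * homog (f i))) := by
          refine Finset.sum_congr rfl fun i _ => ?_
          have ha : a i = Row i + X (Fin.last n) * b i := by
            have hbi := hb i
            linear_combination hbi
          rw [ha]
          ring
      _ = (∑ i, Row i * homog (f i)) + X (Fin.last n) * ∑ i, b i * homog (f i) := by
          rw [Finset.sum_add_distrib, Finset.mul_sum]
      _ = X (Fin.last n) * ∑ i, b i * homog (f i) := by rw [hRowsyz, zero_add]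
  have hg_eq := mul_left_cancel₀ (MvPolynomial.X_ne_zero (Fin.last n)) hcancel
  rw [hg_eq]
  exact Submodule.sum_mem _ fun i _ => Ideal.mul_mem_left _ _ (Ideal.subset_span ⟨i, rfl⟩)

/-! ### Finite dimensionality of graded pieces -/

instance fdHS {N d : ℕ} : FiniteDimensional K (homogeneousSubmodule (Fin N) K d) := by
  rw [homogeneousSubmodule_eq_finsupp_supported]
  have hfin : Finite {v : Fin N →₀ ℕ | v.degree = d} := by
    have hinj0 : Function.Injective
        (fun v : {v : Fin N →₀ ℕ // v.degree = d} => (fun i => v.1 i : Fin N → ℕ)) := by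
      intro a b hab
      exact Subtype.ext (Finsupp.ext fun i => congrFun hab i)
    have hinj : Function.Injective (fun v : {v : Fin N →₀ ℕ // v.degree = d} =>
        (fun i => (⟨min (v.1 i) d, by omega⟩ : Fin (d + 1)) : Fin N → Fin (d + 1))) := by
      intro a b hab
      apply hinj0
      funext i
      have h1 : a.1 i ≤ d := by
        have hd := Finsupp.le_degree i a.1
        rw [a.2] at hd
        exact hd
      have h2 : b.1 i ≤ d := by
        have hd := Finsupp.le_degree i b.1
        rw [b.2] at hd
        exact hd
      have hcf := congrArg Fin.val (congrFun hab i)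
      simp only at hcf
      rw [min_eq_left h1, min_eq_left h2] at hcf
      exact hcf
    exact Finite.of_injective _ hinj
  haveI := Fintype.ofFinite {v : Fin N →₀ ℕ | v.degree = d}
  exact Module.Finite.equiv
    ((AddMonoidAlgebra.supportedEquivFinsupp (S := K) (R := K) {v : Fin N →₀ ℕ | v.degree = d}) ≪≫ₗ
      Finsupp.linearEquivFunOnFinite K K _).symm

/-! ### Dimension counting -/

theorem decomp_J2 {f : Fin M → MvPolynomial (Fin n) K} {dg : Fin M → ℕ}
    (hfh : ∀ i, (homog (f i)).IsHomogeneous (dg i)) (hpos : ∀ i, 0 < dg i)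
    {g : MvPolynomial (Fin (n + 1)) K} {d : ℕ} (hg : g.IsHomogeneous d)
    (hmem : g ∈ Ideal.span (Set.range fun i => homog (f i)) ⊔
      Ideal.span {(X (Fin.last n) : MvPolynomial (Fin (n + 1)) K)}) :
    ∃ h : MvPolynomial (Fin (n + 1)) K, h.IsHomogeneous (d - 1) ∧ (d = 0 → h = 0) ∧
      g - X (Fin.last n) * h ∈ Ideal.span (Set.range fun i => homog (f i)) := by
  classical
  set G : Fin M ⊕ Unit → MvPolynomial (Fin (n + 1)) K :=
    Sum.elim (fun i => homog (f i)) (fun _ => X (Fin.last n)) with hG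
  have hspan : Ideal.span (Set.range G) =
      Ideal.span (Set.range fun i => homog (f i)) ⊔ Ideal.span {X (Fin.last n)} := by
    rw [hG, Set.Sum.elim_range, Ideal.span_union, Set.range_const]
  have hGh : ∀ i, (G i).IsHomogeneous (Sum.elim dg (fun _ => 1) i) := by
    rintro (i | u)
    · exact hfh i
    · exact isHomogeneous_X _ _
  have hmem' : g ∈ Ideal.span (Set.range G) := by rw [hspan]; exact hmem
  obtain ⟨a, hahom, havan, hasum⟩ := hc_span hGh hmem' d
  rw [homogeneousComponent_of_mem ((mem_homogeneousSubmodule _ _).2 hg), if_pos rfl] at hasum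
  refine ⟨a (Sum.inr ()), hahom _, fun hd0 => havan _ (by simp [hd0]), ?_⟩
  rw [hasum, Fintype.sum_sum_type]
  have hunit : ∑ u : Unit, a (Sum.inr u) * G (Sum.inr u)
      = a (Sum.inr ()) * X (Fin.last n) := by simp [hG]
  rw [hunit]
  have heq : (∑ i : Fin M, a (Sum.inl i) * G (Sum.inl i)) + a (Sum.inr ()) * X (Fin.last n)
      - X (Fin.last n) * a (Sum.inr ()) = ∑ i : Fin M, a (Sum.inl i) * G (Sum.inl i) := by
    ring
  rw [heq]
  exact Submodule.sum_mem _ fun i _ =>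
    Ideal.mul_mem_left _ _ (Ideal.subset_span ⟨i, by simp [hG]⟩)

theorem piX_mem_J2 {f : Fin M → MvPolynomial (Fin n) K}
    {g : MvPolynomial (Fin (n + 1)) K}
    (hmem : piX K n g ∈ Ideal.span (Set.range fun i => topPart (f i))) :
    g ∈ Ideal.span (Set.range fun i => homog (f i)) ⊔
      Ideal.span {(X (Fin.last n) : MvPolynomial (Fin (n + 1)) K)} := by
  have hIle : Ideal.span (Set.range fun i => topPart (f i)) ≤
      Ideal.comap (rename Fin.castSucc : MvPolynomial (Fin n) K →ₐ[K] _)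
        (Ideal.span (Set.range fun i => homog (f i)) ⊔ Ideal.span {X (Fin.last n)}) := by
    rw [Ideal.span_le]
    rintro _ ⟨i, rfl⟩
    rw [SetLike.mem_coe, Ideal.mem_comap]
    show rename Fin.castSucc (topPart (f i)) ∈ _
    rw [← piX_homog (f i)]
    have heq : rename Fin.castSucc (piX K n (homog (f i))) =
        homog (f i) - (homog (f i) - rename Fin.castSucc (piX K n (homog (f i)))) := by ring
    rw [heq]
    exact Submodule.sub_mem _ (Ideal.mem_sup_left (Ideal.subset_span ⟨i, rfl⟩))
      (Ideal.mem_sup_right (sub_rename_piX_mem _))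
  have h3 := Ideal.mem_comap.1 (hIle hmem)
  have heq : g = (g - rename Fin.castSucc (piX K n g)) + rename Fin.castSucc (piX K n g) := by
    ring
  rw [heq]
  exact Submodule.add_mem _ (Ideal.mem_sup_right (sub_rename_piX_mem g)) h3

set_option maxHeartbeats 1600000 in
theorem finrank_U {f : Fin M → MvPolynomial (Fin n) K} {dg : Fin M → ℕ}
    (hdeg : ∀ i, (f i).totalDegree = dg i) (d : ℕ) :
    Module.finrank K ((homogeneousSubmodule (Fin (n + 1)) K d).map
      (Ideal.Quotient.mkₐ K (Ideal.span (Set.range fun i => homog (f i)) ⊔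
        Ideal.span {(X (Fin.last n) : MvPolynomial (Fin (n + 1)) K)})).toLinearMap)
    = hilbertFn K (Ideal.span (Set.range fun i => topPart (f i))) d := by
  classical
  set I : Ideal (MvPolynomial (Fin n) K) := Ideal.span (Set.range fun i => topPart (f i))
    with hI
  set J2 : Ideal (MvPolynomial (Fin (n + 1)) K) :=
    Ideal.span (Set.range fun i => homog (f i)) ⊔ Ideal.span {X (Fin.last n)} with hJ2
  set αA : MvPolynomial (Fin (n + 1)) K →ₐ[K] MvPolynomial (Fin n) K ⧸ I :=
    (Ideal.Quotient.mkₐ K I).comp (piX K n) with hαA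
  have hαker : ∀ a ∈ J2, αA a = 0 := by
    have hle : J2 ≤ RingHom.ker αA.toRingHom := by
      rw [hJ2]
      apply sup_le
      · rw [Ideal.span_le]
        rintro _ ⟨i, rfl⟩
        rw [SetLike.mem_coe, RingHom.mem_ker]
        show Ideal.Quotient.mkₐ K I (piX K n (homog (f i))) = 0
        rw [piX_homog, Ideal.Quotient.mkₐ_eq_mk, Ideal.Quotient.eq_zero_iff_mem]
        exact Ideal.subset_span ⟨i, rfl⟩
      · rw [Ideal.span_le]
        rintro x hx
        rw [Set.mem_singleton_iff] at hx
        subst hx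
        rw [SetLike.mem_coe, RingHom.mem_ker]
        show Ideal.Quotient.mkₐ K I (piX K n (X (Fin.last n))) = 0
        rw [piX_y, map_zero]
    intro a ha
    have hmem := hle ha
    rw [RingHom.mem_ker] at hmem
    exact hmem
  set βA : (MvPolynomial (Fin (n + 1)) K ⧸ J2) →ₐ[K] MvPolynomial (Fin n) K ⧸ I :=
    Ideal.Quotient.liftₐ J2 αA hαker with hβA
  have hβmk : ∀ g : MvPolynomial (Fin (n + 1)) K,
      βA (Ideal.Quotient.mkₐ K J2 g) = Ideal.Quotient.mkₐ K I (piX K n g) := by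
    intro g
    rw [hβA, Ideal.Quotient.mkₐ_eq_mk, Ideal.Quotient.liftₐ_apply]
    rfl
  set θ : ((homogeneousSubmodule (Fin (n + 1)) K d).map
      (Ideal.Quotient.mkₐ K J2).toLinearMap) →ₗ[K] MvPolynomial (Fin n) K ⧸ I :=
    βA.toLinearMap ∘ₗ ((homogeneousSubmodule (Fin (n + 1)) K d).map
      (Ideal.Quotient.mkₐ K J2).toLinearMap).subtype with hθ
  have hinj : Function.Injective θ := by
    rw [← LinearMap.ker_eq_bot, eq_bot_iff]
    rintro ⟨x, hx⟩ hker
    obtain ⟨g, hgmem, hgx⟩ := hx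
    rw [LinearMap.mem_ker, hθ] at hker
    have hβx : βA x = 0 := hker
    rw [← hgx, AlgHom.toLinearMap_apply, hβmk] at hβx
    rw [Ideal.Quotient.mkₐ_eq_mk, Ideal.Quotient.eq_zero_iff_mem] at hβx
    have hgJ2 : g ∈ J2 := piX_mem_J2 hβx
    have hx0 : x = 0 := by
      rw [← hgx]
      simp only [AlgHom.toLinearMap_apply, Ideal.Quotient.mkₐ_eq_mk]
      rw [Ideal.Quotient.eq_zero_iff_mem]
      exact hgJ2
    exact Submodule.mem_bot _ |>.2 (Subtype.ext hx0)
  have hrange : LinearMap.range θ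
      = (homogeneousSubmodule (Fin n) K d).map (Ideal.Quotient.mkₐ K I).toLinearMap := by
    rw [hθ, LinearMap.range_comp, Submodule.range_subtype, ← Submodule.map_comp]
    apply le_antisymm
    · rintro _ ⟨g, hgmem, rfl⟩
      refine ⟨piX K n g, ?_, ?_⟩
      · exact (mem_homogeneousSubmodule _ _).2
          (piX_isHomogeneous ((mem_homogeneousSubmodule _ _).1 hgmem))
      · show Ideal.Quotient.mkₐ K I (piX K n g) = _
        rw [← hβmk]
        rfl
    · rintro _ ⟨p, hpmem, rfl⟩
      refine ⟨rename Fin.castSucc p, ?_, ?_⟩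
      · exact (mem_homogeneousSubmodule _ _).2
          (IsHomogeneous.rename_isHomogeneous ((mem_homogeneousSubmodule _ _).1 hpmem))
      · show βA (Ideal.Quotient.mkₐ K J2 (rename Fin.castSucc p)) = _
        rw [hβmk, piX_rename]
        rfl
  have hfr := (LinearEquiv.ofInjective θ hinj).finrank_eq
  rw [hfr, hrange]
  rfl

set_option maxHeartbeats 1600000 in
theorem main_rec {f : Fin M → MvPolynomial (Fin n) K} {dg : Fin M → ℕ} {D : ℕ}
    (hdeg : ∀ i, (f i).totalDegree = dg i) (hpos : ∀ i, 0 < dg i)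
    (hcsr : IsDRegularSeq (fun i => topPart (f i)) dg D)
    {d : ℕ} (hd : 0 < d) (hdD : d < D) :
    hilbertFn K (Ideal.span (Set.range fun i => homog (f i))) d =
      hilbertFn K (Ideal.span (Set.range fun i => topPart (f i))) d +
        hilbertFn K (Ideal.span (Set.range fun i => homog (f i))) (d - 1) := by
  classical
  have hfh : ∀ i, (homog (f i)).IsHomogeneous (dg i) := fun i =>
    hdeg i ▸ homog_isHomogeneous (f i)
  set J : Ideal (MvPolynomial (Fin (n + 1)) K) :=
    Ideal.span (Set.range fun i => homog (f i)) with hJ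
  set I : Ideal (MvPolynomial (Fin n) K) :=
    Ideal.span (Set.range fun i => topPart (f i)) with hI
  set J2 : Ideal (MvPolynomial (Fin (n + 1)) K) := J ⊔ Ideal.span {X (Fin.last n)} with hJ2
  set φ := (Ideal.Quotient.mkₐ K J).toLinearMap with hφ
  set S : ℕ → Submodule K (MvPolynomial (Fin (n + 1)) K) :=
    fun e => homogeneousSubmodule (Fin (n + 1)) K e with hS
  set W : ℕ → Submodule K (MvPolynomial (Fin (n + 1)) K ⧸ J) := fun e => (S e).map φ with hW
  set ψA : (MvPolynomial (Fin (n + 1)) K ⧸ J) →ₐ[K] MvPolynomial (Fin (n + 1)) K ⧸ J2 :=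
    Ideal.Quotient.liftₐ J (Ideal.Quotient.mkₐ K J2)
      (fun a ha => by
        rw [Ideal.Quotient.mkₐ_eq_mk, Ideal.Quotient.eq_zero_iff_mem]
        exact Ideal.mem_sup_left ha) with hψA
  have hψmk : ∀ g, ψA (Ideal.Quotient.mkₐ K J g) = Ideal.Quotient.mkₐ K J2 g := by
    intro g
    rw [hψA]
    simp only [Ideal.Quotient.mkₐ_eq_mk, Ideal.Quotient.liftₐ_apply, Ideal.Quotient.lift_mk]
    rfl
  set μ : (MvPolynomial (Fin (n + 1)) K ⧸ J) →ₗ[K] MvPolynomial (Fin (n + 1)) K ⧸ J :=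
    LinearMap.mulLeft K (Ideal.Quotient.mkₐ K J (X (Fin.last n))) with hμ
  have hμφ : ∀ g, μ (φ g) = φ (X (Fin.last n) * g) := by
    intro g
    rw [hμ, hφ]
    show Ideal.Quotient.mkₐ K J (X (Fin.last n)) * Ideal.Quotient.mkₐ K J g
      = Ideal.Quotient.mkₐ K J (X (Fin.last n) * g)
    rw [map_mul]
  set B : Submodule K (MvPolynomial (Fin (n + 1)) K ⧸ J) := (S (d - 1)).map (μ ∘ₗ φ) with hB
  set τ := ψA.toLinearMap ∘ₗ (W d).subtype with hτ
  have hτrange : LinearMap.range τ = (S d).map (Ideal.Quotient.mkₐ K J2).toLinearMap := by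
    rw [hτ, LinearMap.range_comp, Submodule.range_subtype, hW]
    dsimp only
    rw [← Submodule.map_comp]
    refine congrArg (fun (F : _ →ₗ[K] _) => Submodule.map F (S d)) ?_
    exact LinearMap.ext fun g => hψmk g
  have hBW : B ≤ W d := by
    rw [hB, hW]
    dsimp only
    rintro _ ⟨h, hh, rfl⟩
    refine ⟨X (Fin.last n) * h, ?_, ?_⟩
    · refine (mem_homogeneousSubmodule _ _).2 ?_
      have hmul := (isHomogeneous_X K (Fin.last n)).mul ((mem_homogeneousSubmodule _ _).1 hh)
      rwa [show 1 + (d - 1) = d by omega] at hmul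
    · exact (hμφ h).symm
  have hker : LinearMap.ker τ = Submodule.comap (W d).subtype B := by
    ext x
    rw [LinearMap.mem_ker, Submodule.mem_comap]
    constructor
    · intro hkx
      obtain ⟨g, hgmem, hgx⟩ := x.2
      have hx0 : ψA x.1 = 0 := hkx
      rw [← hgx, hφ] at hx0
      simp only [AlgHom.toLinearMap_apply] at hx0
      rw [hψmk, Ideal.Quotient.mkₐ_eq_mk, Ideal.Quotient.eq_zero_iff_mem] at hx0
      have hx0' : g ∈ Ideal.span (Set.range fun i => homog (f i)) ⊔
          Ideal.span {(X (Fin.last n) : MvPolynomial (Fin (n + 1)) K)} := hx0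
      obtain ⟨h, hhhom, _, hgh⟩ :=
        decomp_J2 hfh hpos ((mem_homogeneousSubmodule _ _).1 hgmem) hx0'
      refine ⟨h, (mem_homogeneousSubmodule _ _).2 hhhom, ?_⟩
      show μ (φ h) = x.1
      rw [hμφ h, ← hgx, hφ]
      simp only [AlgHom.toLinearMap_apply, Ideal.Quotient.mkₐ_eq_mk]
      rw [← sub_eq_zero, ← map_sub, Ideal.Quotient.eq_zero_iff_mem]
      have heq : X (Fin.last n) * h - g = -(g - X (Fin.last n) * h) := by ring
      rw [heq]
      exact Submodule.neg_mem _ hgh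
    · rintro ⟨h, hh, hhx⟩
      show ψA x.1 = 0
      have hx1 : x.1 = φ (X (Fin.last n) * h) := by
        rw [← hμφ h]
        exact hhx.symm
      rw [hx1, hφ]
      simp only [AlgHom.toLinearMap_apply]
      rw [hψmk, Ideal.Quotient.mkₐ_eq_mk, Ideal.Quotient.eq_zero_iff_mem]
      exact Ideal.mem_sup_right (Ideal.mem_span_singleton.2 (dvd_mul_right _ _))
  set ρ := μ ∘ₗ (W (d - 1)).subtype with hρ
  have hρrange : LinearMap.range ρ = B := by
    rw [hρ, LinearMap.range_comp, Submodule.range_subtype, hW, hB]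
    dsimp only
    rw [← Submodule.map_comp]
  have hρinj : Function.Injective ρ := by
    rw [← LinearMap.ker_eq_bot, eq_bot_iff]
    intro x hker'
    rw [LinearMap.mem_ker] at hker'
    obtain ⟨h, hh, hhx⟩ := x.2
    have hμ0 : μ x.1 = 0 := hker'
    rw [← hhx, hμφ h, hφ] at hμ0
    simp only [AlgHom.toLinearMap_apply, Ideal.Quotient.mkₐ_eq_mk] at hμ0
    rw [Ideal.Quotient.eq_zero_iff_mem] at hμ0
    have hyh' : X (Fin.last n) * h ∈ Ideal.span (Set.range fun i => homog (f i)) := hμ0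
    have hhJ : h ∈ J :=
      y_reg hdeg hcsr ((mem_homogeneousSubmodule _ _).1 hh) (by omega) hyh'
    have hx0 : x.1 = 0 := by
      rw [← hhx, hφ]
      simp only [AlgHom.toLinearMap_apply, Ideal.Quotient.mkₐ_eq_mk]
      rw [Ideal.Quotient.eq_zero_iff_mem]
      exact hhJ
    exact (Submodule.mem_bot K).2 (Subtype.ext hx0)
  haveI hfinW : ∀ e : ℕ, FiniteDimensional K (W e) := by
    intro e
    have hfd : FiniteDimensional K ((S e).map φ) := Module.Finite.map _ _
    exact hfd
  have hfrB : Module.finrank K B = Module.finrank K (W (d - 1)) := by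
    rw [← hρrange]
    exact (LinearEquiv.ofInjective ρ hρinj).finrank_eq.symm
  haveI : FiniteDimensional K (W d) := hfinW d
  have hrn := LinearMap.finrank_range_add_finrank_ker τ
  have hfrker : Module.finrank K (LinearMap.ker τ) = Module.finrank K B := by
    rw [hker]
    exact (Submodule.comapSubtypeEquivOfLe hBW).finrank_eq
  have hfrrange : Module.finrank K (LinearMap.range τ) = hilbertFn K I d := by
    rw [hτrange]
    exact finrank_U (K := K) hdeg d
  have h1 : hilbertFn K J d = Module.finrank K (W d) := rfl
  have h2 : hilbertFn K J (d - 1) = Module.finrank K (W (d - 1)) := rfl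
  rw [h1, h2, ← hrn, hfrrange, hfrker, hfrB]

set_option maxHeartbeats 1600000 in
theorem main_base {f : Fin M → MvPolynomial (Fin n) K} {dg : Fin M → ℕ}
    (hdeg : ∀ i, (f i).totalDegree = dg i) (hpos : ∀ i, 0 < dg i) :
    hilbertFn K (Ideal.span (Set.range fun i => homog (f i))) 0 =
      hilbertFn K (Ideal.span (Set.range fun i => topPart (f i))) 0 := by
  classical
  have hfh : ∀ i, (homog (f i)).IsHomogeneous (dg i) := fun i =>
    hdeg i ▸ homog_isHomogeneous (f i)
  set J : Ideal (MvPolynomial (Fin (n + 1)) K) :=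
    Ideal.span (Set.range fun i => homog (f i)) with hJ
  set I : Ideal (MvPolynomial (Fin n) K) :=
    Ideal.span (Set.range fun i => topPart (f i)) with hI
  set J2 : Ideal (MvPolynomial (Fin (n + 1)) K) := J ⊔ Ideal.span {X (Fin.last n)} with hJ2
  set φ := (Ideal.Quotient.mkₐ K J).toLinearMap with hφ
  set S0 : Submodule K (MvPolynomial (Fin (n + 1)) K) :=
    homogeneousSubmodule (Fin (n + 1)) K 0 with hS0
  set ψA : (MvPolynomial (Fin (n + 1)) K ⧸ J) →ₐ[K] MvPolynomial (Fin (n + 1)) K ⧸ J2 :=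
    Ideal.Quotient.liftₐ J (Ideal.Quotient.mkₐ K J2)
      (fun a ha => by
        rw [Ideal.Quotient.mkₐ_eq_mk, Ideal.Quotient.eq_zero_iff_mem]
        exact Ideal.mem_sup_left ha) with hψA
  have hψmk : ∀ g, ψA (Ideal.Quotient.mkₐ K J g) = Ideal.Quotient.mkₐ K J2 g := by
    intro g
    rw [hψA]
    simp only [Ideal.Quotient.mkₐ_eq_mk, Ideal.Quotient.liftₐ_apply, Ideal.Quotient.lift_mk]
    rfl
  set τ := ψA.toLinearMap ∘ₗ (S0.map φ).subtype with hτ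
  have hτrange : LinearMap.range τ = S0.map (Ideal.Quotient.mkₐ K J2).toLinearMap := by
    rw [hτ, LinearMap.range_comp, Submodule.range_subtype, ← Submodule.map_comp]
    refine congrArg (fun (F : _ →ₗ[K] _) => Submodule.map F S0) ?_
    exact LinearMap.ext fun g => hψmk g
  have hinj : Function.Injective τ := by
    rw [← LinearMap.ker_eq_bot, eq_bot_iff]
    intro x hkx
    rw [LinearMap.mem_ker] at hkx
    obtain ⟨g, hgmem, hgx⟩ := x.2
    have hx0 : ψA x.1 = 0 := hkx
    rw [← hgx, hφ] at hx0
    simp only [AlgHom.toLinearMap_apply] at hx0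
    rw [hψmk, Ideal.Quotient.mkₐ_eq_mk, Ideal.Quotient.eq_zero_iff_mem] at hx0
    have hx0' : g ∈ Ideal.span (Set.range fun i => homog (f i)) ⊔
        Ideal.span {(X (Fin.last n) : MvPolynomial (Fin (n + 1)) K)} := hx0
    obtain ⟨h, _, h0, hgh⟩ :=
      decomp_J2 hfh hpos ((mem_homogeneousSubmodule _ _).1 hgmem) hx0'
    rw [h0 rfl, mul_zero, sub_zero] at hgh
    have hx1 : x.1 = 0 := by
      rw [← hgx, hφ]
      show Ideal.Quotient.mkₐ K J g = 0
      rw [Ideal.Quotient.mkₐ_eq_mk, Ideal.Quotient.eq_zero_iff_mem]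
      exact hgh
    exact (Submodule.mem_bot K).2 (Subtype.ext hx1)
  have hfr := (LinearEquiv.ofInjective τ hinj).finrank_eq
  have h1 : hilbertFn K J 0 = Module.finrank K (S0.map φ) := rfl
  rw [h1, hfr, hτrange]
  exact finrank_U (K := K) hdeg 0

end Stmt3Aux


/-- for an affine cryptographic semi-regular sequence, the Hilbert
function of `R'/⟨F^h⟩` satisfies the recurrence
`HF(d) = HF_{R/⟨F^top⟩}(d) + HF(d-1)` for `d < D`, hence equals the partial sums of
the Hilbert function of `R/⟨F^top⟩`. -/
theorem stmt3 {K : Type*} [Field K] {n M : ℕ}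
    (f : Fin M → MvPolynomial (Fin n) K) (dg : Fin M → ℕ)
    (hdeg : ∀ i, (f i).totalDegree = dg i) (hpos : ∀ i, 0 < dg i)
    (hArt : ∃ d : ℕ, ∀ g : MvPolynomial (Fin n) K, g.IsHomogeneous d →
      g ∈ Ideal.span (Set.range fun i => topPart (f i)))
    (hcsr : IsDRegularSeq (fun i => topPart (f i)) dg
      (degReg K (Ideal.span (Set.range fun i => topPart (f i))))) :
    (∀ d : ℕ, 0 < d →
        d < degReg K (Ideal.span (Set.range fun i => topPart (f i))) →
        hilbertFn K (Ideal.span (Set.range fun i => homog (f i))) d =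
          hilbertFn K (Ideal.span (Set.range fun i => topPart (f i))) d +
            hilbertFn K (Ideal.span (Set.range fun i => homog (f i))) (d - 1)) ∧
    (∀ d : ℕ, d < degReg K (Ideal.span (Set.range fun i => topPart (f i))) →
        hilbertFn K (Ideal.span (Set.range fun i => homog (f i))) d =
          ∑ t ∈ Finset.range (d + 1),
            hilbertFn K (Ideal.span (Set.range fun i => topPart (f i))) t) := by
  constructor
  · intro d hd hdD
    exact Stmt3Aux.main_rec hdeg hpos hcsr hd hdD
  · intro d
    induction d with
    | zero =>
      intro _
      rw [Finset.sum_range_succ, Finset.sum_range_zero, Nat.zero_add]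
      exact Stmt3Aux.main_base hdeg hpos
    | succ d IH =>
      intro hlt
      rw [Finset.sum_range_succ, ← IH (by omega)]
      have hrec := Stmt3Aux.main_rec hdeg hpos hcsr (Nat.succ_pos d) hlt
      rw [Nat.succ_sub_one] at hrec
      simp only [Nat.succ_eq_add_one] at hrec
      omega
end

section
/- With the assumptions of the previous statement (F affine cryptographic semi-regular, D = d_reg(⟨F^top⟩) < ∞), the multiplication-by-y map (R'/⟨F^h⟩)_{d-1} → (R'/⟨F^h⟩)_d is injective for all d < D and surjective for all d ≥ D. In particular, the Hilbert function of R'/⟨F^h⟩ is monotonically increasing up to degree D-1 and monotonically non-increasing from degree D-1 on. -/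
open MvPolynomial

namespace GBPaper

open MvPolynomial Finsupp

section Aux

variable {K : Type*} [Field K]

/-! ### Finsupp degree lemmas -/

lemma degree_add'' {σ : Type*} (a b : σ →₀ ℕ) :
    (a + b).degree = a.degree + b.degree := by
  classical
  simp only [Finsupp.degree_eq_weight_one]
  exact map_add _ a b

lemma degree_single' {σ : Type*} (i : σ) (k : ℕ) :
    (Finsupp.single i k).degree = k := by
  classical
  rcases eq_or_ne k 0 with rfl | hk
  · simp [Finsupp.degree]
  · simp [Finsupp.degree_apply, Finsupp.support_single_ne_zero _ hk]

lemma isHom_iff {σ : Type*} {p : MvPolynomial σ K} {d : ℕ} :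
    p.IsHomogeneous d ↔ ∀ s : σ →₀ ℕ, coeff s p ≠ 0 → s.degree = d := by
  constructor
  · intro h s hs
    rw [Finsupp.degree_eq_weight_one]
    exact h hs
  · intro h s hs
    have := h s hs
    rw [Finsupp.degree_eq_weight_one] at this
    exact this

/-! ### extX / restr lemmas -/

variable {n : ℕ}

lemma restr_apply (a : Fin (n + 1) →₀ ℕ) (j : Fin n) : restr a j = a j.castSucc := by
  simp [restr]

lemma extX_castSucc (a : Fin n →₀ ℕ) (j : Fin n) : extX a j.castSucc = a j := by
  have := Finsupp.embDomain_apply_self Fin.castSuccEmb a j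
  simpa [extX] using this

lemma extX_last (a : Fin n →₀ ℕ) : extX a (Fin.last n) = 0 := by
  refine Finsupp.embDomain_notin_range _ _ _ ?_
  rintro ⟨j, hj⟩
  simp only [Fin.coe_castSuccEmb] at hj
  exact (Fin.castSucc_lt_last j).ne hj

lemma restr_extX (a : Fin n →₀ ℕ) : restr (extX a) = a := by
  ext j
  rw [restr_apply, extX_castSucc]

lemma extX_restr {s : Fin (n + 1) →₀ ℕ} (h : s (Fin.last n) = 0) :
    extX (restr s) = s := by
  ext i
  induction i using Fin.lastCases with
  | last => rw [extX_last, h]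
  | cast j => rw [extX_castSucc, restr_apply]

lemma extX_degree (a : Fin n →₀ ℕ) : (extX a).degree = a.degree := by
  classical
  rw [Finsupp.degree_apply, Finsupp.degree_apply, extX, Finsupp.support_embDomain, Finset.sum_map]
  exact Finset.sum_congr rfl fun j _ => Finsupp.embDomain_apply_self _ _ _

/-! ### topPartR lemmas -/

lemma topPartR_def (p : MvPolynomial (Fin (n + 1)) K) :
    topPartR p = MvPolynomial.aeval
      (Fin.lastCases 0 fun i => (MvPolynomial.X i : MvPolynomial (Fin n) K)) p := rfl

lemma topPartR_add (p q : MvPolynomial (Fin (n + 1)) K) :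
    topPartR (p + q) = topPartR p + topPartR q := map_add (MvPolynomial.aeval _) p q

lemma topPartR_mul (p q : MvPolynomial (Fin (n + 1)) K) :
    topPartR (p * q) = topPartR p * topPartR q := map_mul (MvPolynomial.aeval _) p q

lemma topPartR_sub (p q : MvPolynomial (Fin (n + 1)) K) :
    topPartR (p - q) = topPartR p - topPartR q := map_sub (MvPolynomial.aeval _) p q

lemma topPartR_zero : topPartR (0 : MvPolynomial (Fin (n + 1)) K) = 0 :=
  map_zero (MvPolynomial.aeval _)

lemma topPartR_sum {ι : Type*} (s : Finset ι) (g : ι → MvPolynomial (Fin (n + 1)) K) :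
    topPartR (∑ i ∈ s, g i) = ∑ i ∈ s, topPartR (g i) := map_sum (MvPolynomial.aeval _) _ _

lemma topPartR_y : topPartR (yvar K n) = 0 := by
  rw [topPartR_def, yvar, aeval_X, Fin.lastCases_last]

lemma topPartR_monomial_ne {s : Fin (n + 1) →₀ ℕ} (h : s (Fin.last n) ≠ 0) (c : K) :
    topPartR (monomial s c) = 0 := by
  rw [topPartR_def, aeval_monomial, Finsupp.prod]
  rw [Finset.prod_eq_zero (Finsupp.mem_support_iff.2 h)]
  · exact mul_zero _
  · rw [Fin.lastCases_last, zero_pow h]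

lemma topPartR_monomial_extX (t : Fin n →₀ ℕ) (c : K) :
    topPartR (monomial (extX t) c) = monomial t c := by
  classical
  rw [topPartR_def, aeval_monomial, Finsupp.prod, extX, Finsupp.support_embDomain,
    Finset.prod_map, monomial_eq, Finsupp.prod, algebraMap_eq]
  congr 1
  refine Finset.prod_congr rfl fun j _ => ?_
  rw [Finsupp.embDomain_apply_self]
  show Fin.lastCases (motive := fun _ => MvPolynomial (Fin n) K) 0
      (fun i => MvPolynomial.X i) j.castSucc ^ t j = MvPolynomial.X j ^ t j
  rw [Fin.lastCases_castSucc]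

lemma coeff_topPartR (p : MvPolynomial (Fin (n + 1)) K) (t : Fin n →₀ ℕ) :
    coeff t (topPartR p) = coeff (extX t) p := by
  classical
  rw [MvPolynomial.as_sum p, topPartR_sum, MvPolynomial.coeff_sum, MvPolynomial.coeff_sum]
  refine Finset.sum_congr rfl fun s _ => ?_
  by_cases hs : s (Fin.last n) = 0
  · rw [← extX_restr hs, topPartR_monomial_extX, coeff_monomial, coeff_monomial]
    have : extX (restr s) = extX t ↔ restr s = t := by
      constructor
      · intro h
        have := congrArg restr h
        rwa [restr_extX, restr_extX] at this
      · intro h; rw [h]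
    simp only [this]
  · have hne : s ≠ extX t := fun h => hs (h ▸ extX_last t)
    rw [topPartR_monomial_ne hs, coeff_zero, coeff_monomial, if_neg hne]

lemma topPartR_isHom {p : MvPolynomial (Fin (n + 1)) K} {d : ℕ}
    (hp : p.IsHomogeneous d) : (topPartR p).IsHomogeneous d := by
  rw [isHom_iff]
  intro t ht
  rw [coeff_topPartR] at ht
  have := isHom_iff.1 hp _ ht
  rwa [extX_degree] at this

lemma coeff_eq_zero_of_topPartR_zero {p : MvPolynomial (Fin (n + 1)) K}
    (h : topPartR p = 0) {s : Fin (n + 1) →₀ ℕ} (hs : s (Fin.last n) = 0) :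
    coeff s p = 0 := by
  rw [← extX_restr hs, ← coeff_topPartR, h, coeff_zero]

/-! ### the embedding R → R' -/

lemma topPartR_rename (p : MvPolynomial (Fin n) K) :
    topPartR (rename Fin.castSucc p) = p := by
  rw [topPartR_def, aeval_rename]
  have : ((Fin.lastCases 0 fun i => (MvPolynomial.X i : MvPolynomial (Fin n) K)) ∘
      Fin.castSucc) = MvPolynomial.X := by
    funext j
    simp
  rw [this, aeval_X_left_apply]

/-! ### homog lemmas -/

lemma homog_isHom (g : MvPolynomial (Fin n) K) :
    (homog g).IsHomogeneous g.totalDegree := by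
  refine IsHomogeneous.sum _ _ _ fun s hs => ?_
  refine isHomogeneous_monomial _ ?_
  rw [degree_add'', extX_degree, degree_single']
  have h1 : s.degree ≤ g.totalDegree := by
    have := MvPolynomial.le_totalDegree hs
    rwa [Finsupp.degree]
  omega

lemma topPartR_homog (g : MvPolynomial (Fin n) K) :
    topPartR (homog g) = topPart g := by
  classical
  rw [homog, topPartR_sum]
  have key : ∀ s ∈ g.support,
      topPartR (monomial
        (extX s + Finsupp.single (Fin.last n) (g.totalDegree - s.degree)) (coeff s g))
      = if s.degree = g.totalDegree then monomial s (coeff s g) else 0 := by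
    intro s hs
    have hle : s.degree ≤ g.totalDegree := by
      have := MvPolynomial.le_totalDegree hs
      rwa [Finsupp.degree]
    by_cases hd : s.degree = g.totalDegree
    · rw [if_pos hd, hd, Nat.sub_self, Finsupp.single_zero, add_zero, topPartR_monomial_extX]
    · rw [if_neg hd]
      refine topPartR_monomial_ne ?_ _
      rw [Finsupp.add_apply, extX_last, Finsupp.single_eq_same, zero_add]
      omega
  rw [Finset.sum_congr rfl key, Finset.sum_ite, Finset.sum_const_zero, add_zero,
    topPart, homogeneousComponent_apply]

/-! ### extracting a factor of y -/

lemma y_factor {p : MvPolynomial (Fin (n + 1)) K}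
    (h0 : topPartR p = 0) :
    ∃ q : MvPolynomial (Fin (n + 1)) K, p = yvar K n * q ∧
      ∀ d, p.IsHomogeneous d → q.IsHomogeneous (d - 1) := by
  classical
  set q : MvPolynomial (Fin (n + 1)) K :=
    ∑ s ∈ p.support, monomial (s - Finsupp.single (Fin.last n) 1) (coeff s p) with hq
  have hsupp : ∀ s ∈ p.support, s (Fin.last n) ≠ 0 := by
    intro s hs hlast
    exact (MvPolynomial.mem_support_iff.1 hs) (coeff_eq_zero_of_topPartR_zero h0 hlast)
  have key : p = yvar K n * q := by
    rw [hq, Finset.mul_sum]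
    have : ∀ s ∈ p.support,
        yvar K n * monomial (s - Finsupp.single (Fin.last n) 1) (coeff s p)
          = monomial s (coeff s p) := by
      intro s hs
      have hfix : Finsupp.single (Fin.last n) 1 + (s - Finsupp.single (Fin.last n) 1) = s := by
        ext i
        by_cases hi : i = Fin.last n
        · subst hi
          have := hsupp s hs
          simp only [Finsupp.add_apply, Finsupp.single_eq_same, Finsupp.tsub_apply]
          omega
        · simp only [Finsupp.add_apply, Finsupp.single_apply, Finsupp.tsub_apply,
            if_neg (Ne.symm hi)]
          omega
      rw [yvar, ← pow_one (MvPolynomial.X (Fin.last n) : MvPolynomial (Fin (n+1)) K),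
        ← monomial_single_add, hfix]
    rw [Finset.sum_congr rfl this]
    exact MvPolynomial.as_sum p
  refine ⟨q, key, fun d hd => ?_⟩
  rw [isHom_iff]
  intro u hu
  have : coeff (Finsupp.single (Fin.last n) 1 + u) p ≠ 0 := by
    rw [key, yvar, MvPolynomial.coeff_X_mul]
    exact hu
  have := isHom_iff.1 hd _ this
  rw [degree_add'', degree_single'] at this
  omega

/-! ### homogeneous decomposition lemmas -/

section Decomp

variable {σ : Type*} {M : ℕ}

lemma hc_mul_right {a h : MvPolynomial σ K} {e : ℕ} (hh : h.IsHomogeneous e) (d : ℕ) :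
    homogeneousComponent d (a * h) =
      if e ≤ d then homogeneousComponent (d - e) a * h else 0 := by
  classical
  ext s
  rw [coeff_homogeneousComponent]
  by_cases hle : e ≤ d
  · rw [if_pos hle]
    by_cases hsd : s.degree = d
    · rw [if_pos hsd, MvPolynomial.coeff_mul, MvPolynomial.coeff_mul]
      refine Finset.sum_congr rfl fun uv huv => ?_
      rw [coeff_homogeneousComponent]
      by_cases hv : coeff uv.2 h = 0
      · rw [hv, mul_zero, mul_zero]
      · have hdeg2 : uv.2.degree = e := isHom_iff.1 hh _ hv
        have hsum : uv.1 + uv.2 = s := Finset.HasAntidiagonal.mem_antidiagonal.1 huv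
        have h1 : uv.1.degree = d - e := by
          have := congrArg Finsupp.degree hsum
          rw [degree_add''] at this
          omega
        rw [if_pos h1]
    · rw [if_neg hsd, MvPolynomial.coeff_mul]
      refine (Finset.sum_eq_zero fun uv huv => ?_).symm
      rw [coeff_homogeneousComponent]
      by_cases hv : coeff uv.2 h = 0
      · rw [hv, mul_zero]
      · have hdeg2 := isHom_iff.1 hh _ hv
        have hsum := Finset.HasAntidiagonal.mem_antidiagonal.1 huv
        rw [if_neg, zero_mul]
        intro h1
        apply hsd
        have := congrArg Finsupp.degree hsum
        rw [degree_add'', h1, hdeg2] at this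
        omega
  · rw [if_neg hle, coeff_zero]
    by_cases hsd : s.degree = d
    · rw [if_pos hsd, MvPolynomial.coeff_mul]
      refine Finset.sum_eq_zero fun uv huv => ?_
      by_cases hv : coeff uv.2 h = 0
      · rw [hv, mul_zero]
      · exfalso
        have hdeg2 := isHom_iff.1 hh _ hv
        have hsum := Finset.HasAntidiagonal.mem_antidiagonal.1 huv
        have := congrArg Finsupp.degree hsum
        rw [degree_add''] at this
        omega
    · rw [if_neg hsd]

lemma homog_span_decomp (F : Fin M → MvPolynomial σ K) (dg : Fin M → ℕ)
    (hF : ∀ i, (F i).IsHomogeneous (dg i)) (S : Set (Fin M)) {p : MvPolynomial σ K} {d : ℕ}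
    (hp : p.IsHomogeneous d) (hmem : p ∈ Ideal.span (F '' S)) :
    ∃ c : Fin M → MvPolynomial σ K,
      (∀ j, (c j).IsHomogeneous (d - dg j)) ∧ (∀ j, j ∉ S → c j = 0) ∧
      (∀ j, d < dg j → c j = 0) ∧ p = ∑ j, c j * F j := by
  classical
  rw [Ideal.span] at hmem
  obtain ⟨l, hl, hlc⟩ := (Finsupp.mem_span_image_iff_linearCombination (MvPolynomial σ K)).1 hmem
  have hrep : (∑ j : Fin M, l j * F j) = p := by
    rw [← hlc, Finsupp.linearCombination_apply, Finsupp.sum]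
    simp only [smul_eq_mul]
    exact (Finset.sum_subset (Finset.subset_univ _)
      (fun j _ hj => by rw [Finsupp.notMem_support_iff.1 hj, zero_mul])).symm
  refine ⟨fun j => if dg j ≤ d then homogeneousComponent (d - dg j) (l j) else 0,
    fun j => ?_, fun j hj => ?_, fun j hj => ?_, ?_⟩
  · dsimp only
    split
    · exact homogeneousComponent_isHomogeneous _ _
    · exact isHomogeneous_zero _ _ _
  · have hlj : l j = 0 := by
      rw [Finsupp.mem_supported'] at hl
      exact hl j hj
    dsimp only
    rw [hlj]
    split <;> simp
  · dsimp only
    rw [if_neg (by omega)]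
  · have hpd : homogeneousComponent d p = p := by
      rw [homogeneousComponent_of_mem hp, if_pos rfl]
    calc p = homogeneousComponent d p := hpd.symm
      _ = ∑ j, homogeneousComponent d (l j * F j) := by rw [← hrep, map_sum]
      _ = _ := by
          refine Finset.sum_congr rfl fun j _ => ?_
          rw [hc_mul_right (hF j) d]
          dsimp only
          by_cases hj : dg j ≤ d
          · rw [if_pos hj, if_pos hj]
          · rw [if_neg hj, if_neg hj, zero_mul]

lemma homog_mem_up (I : Ideal (MvPolynomial σ K)) {e : ℕ}
    (h : ∀ p : MvPolynomial σ K, p.IsHomogeneous e → p ∈ I) :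
    ∀ e', e ≤ e' → ∀ p : MvPolynomial σ K, p.IsHomogeneous e' → p ∈ I := by
  intro e' he'
  induction e', he' using Nat.le_induction with
  | base => exact h
  | succ m hm ih =>
    intro p hp
    rw [MvPolynomial.as_sum p]
    refine Ideal.sum_mem _ fun s hs => ?_
    have hdeg : s.degree = m + 1 := isHom_iff.1 hp _ (MvPolynomial.mem_support_iff.1 hs)
    obtain ⟨i, hi⟩ : ∃ i, s i ≠ 0 := by
      by_contra hc
      push_neg at hc
      have : s = 0 := Finsupp.ext fun i => hc i
      rw [this, map_zero] at hdeg
      omega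
    have hfix : Finsupp.single i 1 + (s - Finsupp.single i 1) = s := by
      ext a
      by_cases ha : a = i
      · subst ha
        simp only [Finsupp.add_apply, Finsupp.single_eq_same, Finsupp.tsub_apply]
        omega
      · have h0 : (Finsupp.single i 1) a = 0 := Finsupp.single_eq_of_ne' (Ne.symm ha)
        simp only [Finsupp.add_apply, Finsupp.tsub_apply, h0]
        omega
    rw [← hfix, monomial_single_add, pow_one]
    refine Ideal.mul_mem_left _ _ (ih _ ?_)
    refine isHomogeneous_monomial _ ?_
    have := congrArg Finsupp.degree hfix
    rw [degree_add'', degree_single'] at this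
    omega

lemma syz_trivial (F : Fin M → MvPolynomial σ K) (dg : Fin M → ℕ) (D : ℕ)
    (hF : ∀ i, (F i).IsHomogeneous (dg i))
    (hreg : IsDRegularSeq F dg D) {e : ℕ} (he : e < D) :
    ∀ k : ℕ, ∀ a : Fin M → MvPolynomial σ K,
      (∀ i, (a i).IsHomogeneous (e - dg i)) → (∀ i, e < dg i → a i = 0) →
      (∀ i : Fin M, k ≤ (i : ℕ) → a i = 0) → (∑ i, a i * F i) = 0 →
      ∃ c : Fin M → Fin M → MvPolynomial σ K,
        (∀ i j, (c i j).IsHomogeneous (e - dg i - dg j)) ∧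
        (∀ i j, c j i = - c i j) ∧ (∀ i, c i i = 0) ∧
        (∀ i j, e < dg i + dg j → c i j = 0) ∧
        (∀ i, a i = ∑ j, c i j * F j) := by
  classical
  intro k
  induction k with
  | zero =>
    intro a _ _ hvan _
    exact ⟨fun _ _ => 0, fun i j => isHomogeneous_zero _ _ _, fun i j => by simp,
      fun i => rfl, fun i j _ => rfl, fun i => by rw [hvan i (Nat.zero_le _)]; simp⟩
  | succ k ih =>
    intro a hhom hvdeg hvan hsyz
    by_cases hkM : k < M
    · set ι : Fin M := ⟨k, hkM⟩ with hι
      by_cases hdgι : dg ι ≤ e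
      · -- main case: use D-regularity at index ι
        have haι : a ι ∈ prevIdeal F ι := by
          have hmem : a ι * F ι ∈ prevIdeal F ι := by
            have h0 : a ι * F ι + ∑ i ∈ Finset.univ.erase ι, a i * F i
                = ∑ i, a i * F i :=
              Finset.add_sum_erase _ (fun i => a i * F i) (Finset.mem_univ ι)
            rw [hsyz] at h0
            have heq : a ι * F ι = - ∑ i ∈ Finset.univ.erase ι, a i * F i :=
              eq_neg_of_add_eq_zero_left h0
            rw [heq]
            refine Submodule.neg_mem _ (Submodule.sum_mem _ fun i hi => ?_)
            rcases lt_trichotomy i ι with h | h | h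
            · exact Ideal.mul_mem_left _ _ (Ideal.subset_span ⟨i, h, rfl⟩)
            · exact absurd h (Finset.ne_of_mem_erase hi)
            · have hvi : a i = 0 := by
                refine hvan i ?_
                have := (Fin.lt_def.1 h)
                simp only [hι] at this
                omega
              rw [hvi, zero_mul]
              exact Submodule.zero_mem _
          exact hreg ι (a ι) (e - dg ι) (hhom ι) (by omega) hmem
        obtain ⟨b, hbhom, hbS, hbdeg, hbrep⟩ :=
          homog_span_decomp F dg hF {j | j < ι} (hhom ι) haι
        have hbι : b ι = 0 := hbS ι (by simp)
        set a' : Fin M → MvPolynomial σ K :=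
          fun i => if i = ι then 0 else a i + b i * F ι with ha'
        have hhom' : ∀ i, (a' i).IsHomogeneous (e - dg i) := by
          intro i
          by_cases hiι : i = ι
          · simp only [ha', if_pos hiι]
            exact isHomogeneous_zero _ _ _
          · simp only [ha', if_neg hiι]
            refine (hhom i).add ?_
            by_cases hbz : b i = 0
            · rw [hbz, zero_mul]
              exact isHomogeneous_zero _ _ _
            · have hdgi : dg i ≤ e - dg ι := by
                by_contra hgt
                push_neg at hgt
                exact hbz (hbdeg i hgt)
              have hmul := (hbhom i).mul (hF ι)
              rwa [show e - dg ι - dg i + dg ι = e - dg i by omega] at hmul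
        have hvdeg' : ∀ i, e < dg i → a' i = 0 := by
          intro i hdgi
          by_cases hiι : i = ι
          · simp [ha', hiι]
          · have h1 : a i = 0 := hvdeg i hdgi
            have h2 : b i = 0 := hbdeg i (by omega)
            simp [ha', hiι, h1, h2]
        have hvan' : ∀ i : Fin M, k ≤ (i : ℕ) → a' i = 0 := by
          intro i hki
          by_cases hiι : i = ι
          · simp [ha', hiι]
          · have hne : (i : ℕ) ≠ k := fun hik => hiι (Fin.ext (by simp [hι, hik]))
            have h1 : a i = 0 := hvan i (by omega)
            have h2 : b i = 0 := by
              refine hbS i ?_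
              intro hlt
              have := Fin.lt_def.1 hlt
              simp only [hι] at this
              omega
            simp [ha', hiι, h1, h2]
        have hsyz' : (∑ i, a' i * F i) = 0 := by
          have hsplit : ∀ i ∈ Finset.univ, a' i * F i =
              (a i * F i + b i * (F ι * F i)) -
                (if i = ι then a i * F i + b i * (F ι * F i) else 0) := by
            intro i _
            by_cases hiι : i = ι
            · simp only [ha', if_pos hiι]
              ring
            · simp only [ha', if_neg hiι]
              ring
          have hite : (∑ i, if i = ι then a i * F i + b i * (F ι * F i) else 0)
              = a ι * F ι + b ι * (F ι * F ι) := by simp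
          have h1 : (∑ i, b i * (F ι * F i)) = F ι * a ι := by
            rw [hbrep, Finset.mul_sum]
            exact Finset.sum_congr rfl fun i _ => by ring
          calc (∑ i, a' i * F i)
              = ∑ i, ((a i * F i + b i * (F ι * F i)) -
                  (if i = ι then a i * F i + b i * (F ι * F i) else 0)) :=
                Finset.sum_congr rfl hsplit
            _ = ((∑ i, a i * F i) + ∑ i, b i * (F ι * F i)) -
                  (a ι * F ι + b ι * (F ι * F ι)) := by
                rw [Finset.sum_sub_distrib, Finset.sum_add_distrib, hite]
            _ = 0 := by
                rw [hsyz, hbι, h1]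
                ring
        obtain ⟨c', hc'hom, hc'anti, hc'diag, hc'van, hc'rep⟩ :=
          ih a' hhom' hvdeg' hvan' hsyz'
        refine ⟨fun i j => c' i j + (if i = ι then b j else 0) - (if j = ι then b i else 0),
          ?_, ?_, ?_, ?_, ?_⟩
        · intro i j
          refine ((hc'hom i j).add ?_).sub ?_
          · by_cases hiι : i = ι
            · rw [if_pos hiι, hiι]
              exact hbhom j
            · rw [if_neg hiι]
              exact isHomogeneous_zero _ _ _
          · by_cases hjι : j = ι
            · rw [if_pos hjι, hjι]
              have := hbhom i
              rwa [show e - dg ι - dg i = e - dg i - dg ι by omega] at this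
            · rw [if_neg hjι]
              exact isHomogeneous_zero _ _ _
        · intro i j
          have h := hc'anti i j
          dsimp only
          rw [h]
          ring
        · intro i
          dsimp only
          rw [hc'diag i]
          ring
        · intro i j hdgij
          have h1 : (if i = ι then b j else 0) = 0 := by
            split
            · next hiι => exact hbdeg j (by rw [hiι] at hdgij; omega)
            · rfl
          have h2 : (if j = ι then b i else 0) = 0 := by
            split
            · next hjι => exact hbdeg i (by rw [hjι] at hdgij; omega)
            · rfl
          dsimp only
          rw [hc'van i j hdgij, h1, h2]
          ring
        · intro i
          have hsum : ∀ j, (c' i j + (if i = ι then b j else 0) -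
                (if j = ι then b i else 0)) * F j
              = c' i j * F j + (if i = ι then b j else 0) * F j
                - (if j = ι then b i else 0) * F j := fun j => by ring
          have h3 : (∑ j, (if j = ι then b i else 0) * F j) = b i * F ι := by simp
          have h2 : (∑ j, (if i = ι then b j else 0) * F j)
              = if i = ι then a ι else 0 := by
            by_cases hiι : i = ι
            · simp only [hiι, if_pos rfl]
              exact hbrep.symm
            · simp [hiι]
          dsimp only
          rw [Finset.sum_congr rfl fun j _ => hsum j, Finset.sum_sub_distrib,
            Finset.sum_add_distrib, h3, h2, ← hc'rep i]
          by_cases hiι : i = ι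
          · have h5 : a' i = 0 := by simp [ha', hiι]
            rw [h5, if_pos hiι, hiι, hbι]
            ring
          · have h5 : a' i = a i + b i * F ι := by simp [ha', hiι]
            rw [h5, if_neg hiι]
            ring
      · -- dg ι > e : a ι is already zero
        refine ih a hhom hvdeg ?_ hsyz
        intro i hki
        by_cases hiι : i = ι
        · rw [hiι]
          exact hvdeg ι (by omega)
        · refine hvan i ?_
          have hne : (i : ℕ) ≠ k := fun hik => hiι (Fin.ext (by simp [hι, hik]))
          omega
    · exact ih a hhom hvdeg (fun i hki => absurd i.isLt (by omega)) hsyz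

end Decomp

/-! ### main lemmas -/

section Main

variable {M : ℕ}

lemma main_inj (f : Fin M → MvPolynomial (Fin n) K) (dg : Fin M → ℕ)
    (hdeg : ∀ i, (f i).totalDegree = dg i) (hpos : ∀ i, 0 < dg i)
    (hcsr : IsDRegularSeq (fun i => topPart (f i)) dg
      (degReg K (Ideal.span (Set.range fun i => topPart (f i)))))
    {d : ℕ} (hd0 : 0 < d)
    (hdD : d < degReg K (Ideal.span (Set.range fun i => topPart (f i))))
    (g : MvPolynomial (Fin (n + 1)) K) (hg : g.IsHomogeneous (d - 1))
    (hyg : yvar K n * g ∈ Ideal.span (Set.range fun i => homog (f i))) :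
    g ∈ Ideal.span (Set.range fun i => homog (f i)) := by
  classical
  have hHgen : ∀ i, (homog (f i)).IsHomogeneous (dg i) := fun i => by
    have := homog_isHom (f i)
    rwa [hdeg i] at this
  have hFgen : ∀ i, (topPart (f i)).IsHomogeneous (dg i) := fun i => by
    have := homogeneousComponent_isHomogeneous (f i).totalDegree (f i)
    rw [← topPart] at this
    rwa [hdeg i] at this
  have hyghom : (yvar K n * g).IsHomogeneous d := by
    rw [yvar]
    have := (isHomogeneous_X K (Fin.last n)).mul hg
    rwa [show 1 + (d - 1) = d by omega] at this
  have hmem : yvar K n * g ∈ Ideal.span ((fun i => homog (f i)) '' Set.univ) := by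
    rwa [Set.image_univ]
  obtain ⟨a, hahom, -, hadeg, harep⟩ :=
    homog_span_decomp (fun i => homog (f i)) dg hHgen Set.univ hyghom hmem
  have hsyz : (∑ i, topPartR (a i) * topPart (f i)) = 0 := by
    have h0 : topPartR (yvar K n * g) = 0 := by
      rw [topPartR_mul, topPartR_y, zero_mul]
    calc (∑ i, topPartR (a i) * topPart (f i))
        = topPartR (∑ i, a i * homog (f i)) := by
          rw [topPartR_sum]
          exact (Finset.sum_congr rfl fun i _ => by
            rw [topPartR_mul, topPartR_homog]).symm
      _ = 0 := by rw [← harep]; exact h0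
  obtain ⟨c, hchom, hcanti, hcdiag, hcvan, hcrep⟩ :=
    syz_trivial (fun i => topPart (f i)) dg _ hFgen hcsr hdD M
      (fun i => topPartR (a i))
      (fun i => topPartR_isHom (hahom i))
      (fun i hi => by show topPartR (a i) = 0; rw [hadeg i hi, topPartR_zero])
      (fun i hi => absurd i.isLt (by omega))
      hsyz
  set a' : Fin M → MvPolynomial (Fin (n + 1)) K :=
    fun i => a i - ∑ j, rename Fin.castSucc (c i j) * homog (f j) with ha'
  have hdouble :
      (∑ i, (∑ j, rename Fin.castSucc (c i j) * homog (f j)) * homog (f i)) = 0 := by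
    have hdist : ∀ i, (∑ j, rename Fin.castSucc (c i j) * homog (f j)) * homog (f i)
        = ∑ j, rename Fin.castSucc (c i j) * homog (f j) * homog (f i) :=
      fun i => Finset.sum_mul _ _ _
    rw [Finset.sum_congr rfl fun i _ => hdist i, ← Finset.sum_product']
    refine Finset.sum_ninvolution Prod.swap ?_ ?_ (fun p => Finset.mem_univ _)
      (fun p => rfl)
    · rintro ⟨i, j⟩
      show rename Fin.castSucc (c i j) * homog (f j) * homog (f i) +
        rename Fin.castSucc (c j i) * homog (f i) * homog (f j) = 0
      rw [hcanti i j, map_neg]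
      ring
    · rintro ⟨i, j⟩ hp hps
      apply hp
      have h12 : j = i := by
        have := congrArg Prod.fst hps
        simpa using this
      show rename Fin.castSucc (c i j) * homog (f j) * homog (f i) = 0
      rw [h12, hcdiag, map_zero, zero_mul, zero_mul]
  have hrep' : (∑ i, a' i * homog (f i)) = yvar K n * g := by
    have hstep : ∀ i, a' i * homog (f i)
        = a i * homog (f i) -
          (∑ j, rename Fin.castSucc (c i j) * homog (f j)) * homog (f i) :=
      fun i => by simp only [ha']; ring
    rw [Finset.sum_congr rfl fun i _ => hstep i, Finset.sum_sub_distrib, hdouble, sub_zero,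
      ← harep]
  have htop : ∀ i, topPartR (a' i) = 0 := by
    intro i
    simp only [ha']
    rw [topPartR_sub, topPartR_sum]
    have hterm : ∀ j, topPartR (rename Fin.castSucc (c i j) * homog (f j))
        = c i j * topPart (f j) := fun j => by
      rw [topPartR_mul, topPartR_rename, topPartR_homog]
    rw [Finset.sum_congr rfl fun j _ => hterm j, ← hcrep i, sub_self]
  have hfac : ∀ i, ∃ q, a' i = yvar K n * q := by
    intro i
    obtain ⟨q, hq, -⟩ := y_factor (htop i)
    exact ⟨q, hq⟩
  choose b hb using hfac
  have hfinal : yvar K n * g = yvar K n * ∑ i, b i * homog (f i) := by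
    rw [← hrep', Finset.mul_sum]
    exact Finset.sum_congr rfl fun i _ => by rw [hb i]; ring
  have hy0 : (yvar K n : MvPolynomial (Fin (n + 1)) K) ≠ 0 := by
    rw [yvar]
    exact MvPolynomial.X_ne_zero _
  have hg' : g = ∑ i, b i * homog (f i) := mul_left_cancel₀ hy0 hfinal
  rw [hg']
  exact Ideal.sum_mem _ fun i _ =>
    Ideal.mul_mem_left _ _ (Ideal.subset_span ⟨i, rfl⟩)

lemma main_surj (f : Fin M → MvPolynomial (Fin n) K) (dg : Fin M → ℕ)
    (hdeg : ∀ i, (f i).totalDegree = dg i)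
    (hArt : ∃ d0 : ℕ, ∀ g : MvPolynomial (Fin n) K, g.IsHomogeneous d0 →
      g ∈ Ideal.span (Set.range fun i => topPart (f i)))
    {d : ℕ} (hdD : degReg K (Ideal.span (Set.range fun i => topPart (f i))) ≤ d)
    (g : MvPolynomial (Fin (n + 1)) K) (hg : g.IsHomogeneous d) :
    ∃ h : MvPolynomial (Fin (n + 1)) K, h.IsHomogeneous (d - 1) ∧
      g - yvar K n * h ∈ Ideal.span (Set.range fun i => homog (f i)) := by
  classical
  set I := Ideal.span (Set.range fun i => topPart (f i)) with hI
  have hDmem : ∀ p : MvPolynomial (Fin n) K, p.IsHomogeneous (degReg K I) → p ∈ I := by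
    have hne : {t : ℕ | ∀ p : MvPolynomial (Fin n) K, p.IsHomogeneous t → p ∈ I}.Nonempty := by
      obtain ⟨d0, hd0⟩ := hArt
      exact ⟨d0, hd0⟩
    exact Nat.sInf_mem hne
  have hdmem : ∀ p : MvPolynomial (Fin n) K, p.IsHomogeneous d → p ∈ I :=
    homog_mem_up I hDmem d hdD
  have hHgen : ∀ i, (homog (f i)).IsHomogeneous (dg i) := fun i => by
    have := homog_isHom (f i)
    rwa [hdeg i] at this
  have hFgen : ∀ i, (topPart (f i)).IsHomogeneous (dg i) := fun i => by
    have := homogeneousComponent_isHomogeneous (f i).totalDegree (f i)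
    rw [← topPart] at this
    rwa [hdeg i] at this
  have hmem : topPartR g ∈ Ideal.span ((fun i => topPart (f i)) '' Set.univ) := by
    rw [Set.image_univ]
    exact hdmem _ (topPartR_isHom hg)
  obtain ⟨c, hchom, -, hcdeg, hcrep⟩ :=
    homog_span_decomp (fun i => topPart (f i)) dg hFgen Set.univ (topPartR_isHom hg) hmem
  set q : MvPolynomial (Fin (n + 1)) K :=
    g - ∑ i, rename Fin.castSucc (c i) * homog (f i) with hq
  have hqhom : q.IsHomogeneous d := by
    refine hg.sub (IsHomogeneous.sum _ _ _ fun i _ => ?_)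
    by_cases hdgi : dg i ≤ d
    · have h1 : (rename Fin.castSucc (c i)).IsHomogeneous (d - dg i) :=
        (hchom i).rename_isHomogeneous
      have h2 := h1.mul (hHgen i)
      rwa [show d - dg i + dg i = d by omega] at h2
    · rw [hcdeg i (by omega), map_zero, zero_mul]
      exact isHomogeneous_zero _ _ _
  have hqtop : topPartR q = 0 := by
    rw [hq, topPartR_sub, topPartR_sum]
    have hterm : ∀ i, topPartR (rename Fin.castSucc (c i) * homog (f i))
        = c i * topPart (f i) :=
      fun i => by rw [topPartR_mul, topPartR_rename, topPartR_homog]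
    rw [Finset.sum_congr rfl fun i _ => hterm i, ← hcrep, sub_self]
  obtain ⟨h, hfac, hhom⟩ := y_factor hqtop
  refine ⟨h, hhom d hqhom, ?_⟩
  have hrw : g - yvar K n * h = ∑ i, rename Fin.castSucc (c i) * homog (f i) := by
    rw [← hfac, hq]
    ring
  rw [hrw]
  exact Ideal.sum_mem _ fun i _ => Ideal.mul_mem_left _ _ (Ideal.subset_span ⟨i, rfl⟩)

end Main

/-! ### Hilbert function comparisons -/

section Hilbert

variable (J : Ideal (MvPolynomial (Fin (n + 1)) K))

noncomputable def Vd (d : ℕ) : Submodule K (MvPolynomial (Fin (n + 1)) K ⧸ J) :=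
  (homogeneousSubmodule (Fin (n + 1)) K d).map (Ideal.Quotient.mkₐ K J).toLinearMap

lemma finiteDim_V (d : ℕ) : Module.Finite K (Vd J d) := by
  have hle : homogeneousSubmodule (Fin (n + 1)) K d ≤
      restrictTotalDegree (Fin (n + 1)) K d := by
    intro p hp
    rw [mem_restrictTotalDegree]
    exact MvPolynomial.IsHomogeneous.totalDegree_le hp
  haveI h2 : FiniteDimensional K (homogeneousSubmodule (Fin (n + 1)) K d) :=
    Submodule.finiteDimensional_of_le hle
  unfold Vd
  exact Module.Finite.map _ _

lemma mulY_maps (d : ℕ) :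
    ∀ x ∈ Vd J d,
      (LinearMap.mulLeft K (Ideal.Quotient.mkₐ K J (yvar K n))) x ∈ Vd J (d + 1) := by
  rintro x ⟨p, hp, rfl⟩
  refine ⟨yvar K n * p, ?_, ?_⟩
  · have h1 : (p * yvar K n).IsHomogeneous (d + 1) := by
      rw [yvar]
      exact MvPolynomial.IsHomogeneous.mul
        (show MvPolynomial.IsHomogeneous p d from hp) (isHomogeneous_X K (Fin.last n))
    show (yvar K n * p).IsHomogeneous (d + 1)
    rwa [mul_comm] at h1
  · simp only [LinearMap.mulLeft_apply, AlgHom.toLinearMap_apply, map_mul]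

lemma hilbert_le_succ (d : ℕ)
    (hinj : ∀ g : MvPolynomial (Fin (n + 1)) K, g.IsHomogeneous d →
      yvar K n * g ∈ J → g ∈ J) :
    hilbertFn K J d ≤ hilbertFn K J (d + 1) := by
  classical
  haveI := finiteDim_V J (d + 1)
  let μ : Vd J d →ₗ[K] Vd J (d + 1) :=
    (LinearMap.mulLeft K (Ideal.Quotient.mkₐ K J (yvar K n))).restrict (mulY_maps J d)
  have hinjμ : Function.Injective μ := by
    rw [← LinearMap.ker_eq_bot]
    refine (Submodule.eq_bot_iff _).2 fun x hx => ?_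
    have hx0 := LinearMap.mem_ker.1 hx
    have h2 : Ideal.Quotient.mk J (yvar K n) * (x : MvPolynomial (Fin (n + 1)) K ⧸ J)
        = 0 := by
      have h3 := congrArg (Subtype.val) hx0
      simp only [μ, LinearMap.restrict_coe_apply, LinearMap.mulLeft_apply,
        Ideal.Quotient.mkₐ_eq_mk, ZeroMemClass.coe_zero] at h3
      exact h3
    obtain ⟨p, hp, hpx⟩ := x.2
    rw [AlgHom.toLinearMap_apply, Ideal.Quotient.mkₐ_eq_mk] at hpx
    have hyJ : yvar K n * p ∈ J := by
      have h4 : Ideal.Quotient.mk J (yvar K n * p) = 0 := by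
        rw [map_mul, hpx]
        exact h2
      rwa [Ideal.Quotient.eq_zero_iff_mem] at h4
    have hpJ : p ∈ J := hinj p hp hyJ
    have hval : (x : MvPolynomial (Fin (n + 1)) K ⧸ J) = 0 := by
      rw [← hpx, Ideal.Quotient.eq_zero_iff_mem]
      exact hpJ
    exact Subtype.ext hval
  show Module.finrank K (Vd J d) ≤ Module.finrank K (Vd J (d + 1))
  exact LinearMap.finrank_le_finrank_of_injective hinjμ

lemma hilbert_succ_le (d : ℕ)
    (hsurj : ∀ g : MvPolynomial (Fin (n + 1)) K, g.IsHomogeneous (d + 1) →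
      ∃ h : MvPolynomial (Fin (n + 1)) K, h.IsHomogeneous d ∧ g - yvar K n * h ∈ J) :
    hilbertFn K J (d + 1) ≤ hilbertFn K J d := by
  classical
  haveI := finiteDim_V J d
  let μ : Vd J d →ₗ[K] Vd J (d + 1) :=
    (LinearMap.mulLeft K (Ideal.Quotient.mkₐ K J (yvar K n))).restrict (mulY_maps J d)
  have hsurjμ : Function.Surjective μ := by
    rintro ⟨z, p, hp, rfl⟩
    obtain ⟨h, hhom, hmem⟩ := hsurj p hp
    refine ⟨⟨Ideal.Quotient.mkₐ K J h, h, hhom, rfl⟩, ?_⟩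
    apply Subtype.ext
    have hv : ((μ ⟨Ideal.Quotient.mkₐ K J h, h, hhom, rfl⟩ : Vd J (d + 1)) :
        MvPolynomial (Fin (n + 1)) K ⧸ J)
        = Ideal.Quotient.mk J (yvar K n) * Ideal.Quotient.mk J h := by
      simp only [μ, LinearMap.restrict_coe_apply, LinearMap.mulLeft_apply,
        Ideal.Quotient.mkₐ_eq_mk]
    rw [hv, ← map_mul]
    show Ideal.Quotient.mk J (yvar K n * h)
        = (Ideal.Quotient.mkₐ K J).toLinearMap p
    rw [AlgHom.toLinearMap_apply, Ideal.Quotient.mkₐ_eq_mk]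
    refine Ideal.Quotient.eq.2 ?_
    rw [show yvar K n * h - p = -(p - yvar K n * h) by ring]
    exact neg_mem hmem
  have hrange : LinearMap.range μ = ⊤ := LinearMap.range_eq_top.2 hsurjμ
  have h2 := LinearMap.finrank_range_le μ
  rw [hrange, finrank_top] at h2
  show Module.finrank K (Vd J (d + 1)) ≤ Module.finrank K (Vd J d)
  exact h2

end Hilbert

end Aux

end GBPaper

open GBPaper

/-- for an affine cryptographic semi-regular sequence with
`D = d_reg(⟨F^top⟩) < ∞`, multiplication by `y` on `R'/⟨F^h⟩` is injective into
all degrees `< D` and surjective onto all degrees `≥ D`; in particular the Hilbert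
function increases up to degree `D-1` and is non-increasing afterwards. -/
theorem stmt4 {K : Type*} [Field K] {n M : ℕ}
    (f : Fin M → MvPolynomial (Fin n) K) (dg : Fin M → ℕ)
    (hdeg : ∀ i, (f i).totalDegree = dg i) (hpos : ∀ i, 0 < dg i)
    (hArt : ∃ d : ℕ, ∀ g : MvPolynomial (Fin n) K, g.IsHomogeneous d →
      g ∈ Ideal.span (Set.range fun i => topPart (f i)))
    (hcsr : IsDRegularSeq (fun i => topPart (f i)) dg
      (degReg K (Ideal.span (Set.range fun i => topPart (f i))))) :
    (∀ d : ℕ, 0 < d →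
        d < degReg K (Ideal.span (Set.range fun i => topPart (f i))) →
        ∀ g : MvPolynomial (Fin (n + 1)) K, g.IsHomogeneous (d - 1) →
          yvar K n * g ∈ Ideal.span (Set.range fun i => homog (f i)) →
          g ∈ Ideal.span (Set.range fun i => homog (f i))) ∧
    (∀ d : ℕ, degReg K (Ideal.span (Set.range fun i => topPart (f i))) ≤ d →
        ∀ g : MvPolynomial (Fin (n + 1)) K, g.IsHomogeneous d →
          ∃ h : MvPolynomial (Fin (n + 1)) K, h.IsHomogeneous (d - 1) ∧
            g - yvar K n * h ∈ Ideal.span (Set.range fun i => homog (f i))) ∧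
    (∀ d : ℕ, d + 1 < degReg K (Ideal.span (Set.range fun i => topPart (f i))) →
        hilbertFn K (Ideal.span (Set.range fun i => homog (f i))) d ≤
          hilbertFn K (Ideal.span (Set.range fun i => homog (f i))) (d + 1)) ∧
    (∀ d : ℕ, degReg K (Ideal.span (Set.range fun i => topPart (f i))) ≤ d + 1 →
        hilbertFn K (Ideal.span (Set.range fun i => homog (f i))) (d + 1) ≤
          hilbertFn K (Ideal.span (Set.range fun i => homog (f i))) d) := by
  set J := Ideal.span (Set.range fun i => homog (f i)) with hJ
  have hinj : ∀ d : ℕ, 0 < d →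
      d < degReg K (Ideal.span (Set.range fun i => topPart (f i))) →
      ∀ g : MvPolynomial (Fin (n + 1)) K, g.IsHomogeneous (d - 1) →
        yvar K n * g ∈ J → g ∈ J :=
    fun d h1 h2 g h3 h4 => main_inj f dg hdeg hpos hcsr h1 h2 g h3 h4
  have hsurj : ∀ d : ℕ, degReg K (Ideal.span (Set.range fun i => topPart (f i))) ≤ d →
      ∀ g : MvPolynomial (Fin (n + 1)) K, g.IsHomogeneous d →
        ∃ h : MvPolynomial (Fin (n + 1)) K, h.IsHomogeneous (d - 1) ∧
          g - yvar K n * h ∈ J :=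
    fun d hd g hg => main_surj f dg hdeg hArt hd g hg
  refine ⟨hinj, hsurj, ?_, ?_⟩
  · intro d hd
    refine hilbert_le_succ J d fun g hg hyg => ?_
    exact hinj (d + 1) (by omega) hd g (by rwa [Nat.add_sub_cancel]) hyg
  · intro d hd
    refine hilbert_succ_le J d fun g hg => ?_
    obtain ⟨h, hh, hmem⟩ := hsurj (d + 1) hd g hg
    rw [Nat.add_sub_cancel] at hh
    exact ⟨h, hh, hmem⟩
end
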